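/- arXiv:1812.01876 — 7 statements merged into one kernel-verified Lean document; each statement's English description precedes it below -/
import Mathlib

section
/- Let (X,d,μ) be a metric measure space, let 1 < p < ∞ and let q = p/(p-1) be the conjugate exponent. Suppose C ≥ 0 is a constant such that ‖M^u_μ h‖_{L^q(μ)} ≤ C‖h‖_{L^q(μ)} for every h ∈ L^q(μ). Then for every finite sequence of closed balls B^cl(x_n, r_n), 1 ≤ n ≤ N, with μ(B^cl(x_n, r_n)) > 0, every finite sequence of weights w_n > 0, and every finite sequence of dilations t_n ≥ 1, one has ‖ Σ_{n=1}^N w_n · 1_{B^cl(x_n, t_n r_n)} / μ(B^cl(x_n, t_n r_n)) ‖_{L^p(μ)} ≤ C · ‖ Σ_{n=1}^N w_n · 1_{B^cl(x_n, r_n)} / μ(B^cl(x_n, r_n)) ‖_{L^p(μ)}. -/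
open MeasureTheory Metric ENNReal Set

noncomputable section

/-- The uncentered Hardy–Littlewood maximal operator
`M^u_μ g(x) = sup { (1/μ(B^cl(y,r))) ∫_{B^cl(y,r)} |g| dμ : r > 0, d(x,y) < r, μ(B^cl(y,r)) > 0 }`. -/
def uncenteredMaximal {X : Type*} [MetricSpace X] [MeasurableSpace X]
    (μ : Measure X) (g : X → ℝ) (x : X) : ℝ≥0∞ :=
  ⨆ (y : X) (r : ℝ) (_ : 0 < r) (_ : dist x y < r) (_ : 0 < μ (closedBall y r)),
    (∫⁻ z in closedBall y r, ‖g z‖₊ ∂μ) / μ (closedBall y r)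

/-- The `L^p(μ)` norm of a nonnegative (extended-real-valued) function. -/
def lpNorm {X : Type*} [MeasurableSpace X] (μ : Measure X) (p : ℝ) (F : X → ℝ≥0∞) : ℝ≥0∞ :=
  (∫⁻ x, F x ^ p ∂μ) ^ (1 / p)

/-- The uncentered maximal function is measurable (indeed lower semicontinuous). -/
lemma measurable_uncenteredMaximal {X : Type*} [MetricSpace X] [MeasurableSpace X] [BorelSpace X]
    (μ : Measure X) (g : X → ℝ) : Measurable (uncenteredMaximal μ g) := by
  apply measurable_of_Ioi
  intro a
  have : uncenteredMaximal μ g ⁻¹' Ioi a =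
      ⋃ (y : X), ⋃ (r : ℝ), ⋃ (_ : 0 < r ∧ 0 < μ (closedBall y r) ∧
        a < (∫⁻ z in closedBall y r, ‖g z‖₊ ∂μ) / μ (closedBall y r)), ball y r := by
    ext z
    simp only [mem_preimage, mem_Ioi, uncenteredMaximal, lt_iSup_iff, mem_iUnion, mem_ball]
    constructor
    · rintro ⟨y, rr, h1, h2, h3, h4⟩
      exact ⟨y, rr, ⟨h1, h3, h4⟩, h2⟩
    · rintro ⟨y, rr, ⟨h1, h3, h4⟩, h2⟩
      exact ⟨y, rr, h1, h2, h3, h4⟩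
  rw [this]
  exact (isOpen_iUnion fun y => isOpen_iUnion fun rr => isOpen_iUnion fun _ =>
    isOpen_ball).measurableSet

/-- The average of `|g|` over a closed ball of positive measure containing `z` is at most the
uncentered maximal function of `g` at `z`. -/
lemma avg_le_uncenteredMaximal {X : Type*} [MetricSpace X] [MeasurableSpace X] [BorelSpace X]
    (μ : Measure X) (hfin : ∀ s : Set X, Bornology.IsBounded s → μ s < ∞)
    (g : X → ℝ) {y z : X} {R : ℝ} (hR : 0 < R) (hμR : 0 < μ (closedBall y R))
    (hz : dist z y ≤ R) :
    (∫⁻ u in closedBall y R, ‖g u‖₊ ∂μ) / μ (closedBall y R) ≤ uncenteredMaximal μ g z := by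
  set s : ℕ → Set X := fun k => closedBall y (R + 1 / (k + 1)) with hs
  set I : ℝ≥0∞ := ∫⁻ u in closedBall y R, ‖g u‖₊ ∂μ with hI
  have hanti : Antitone s := by
    intro k l hkl
    apply closedBall_subset_closedBall
    have : (1 : ℝ) / (l + 1) ≤ 1 / (k + 1) := by
      apply one_div_le_one_div_of_le (by positivity)
      have : (k : ℝ) ≤ l := by exact_mod_cast hkl
      linarith
    linarith
  have hiInter : ⋂ k, s k = closedBall y R := by
    ext u
    simp only [mem_iInter, mem_closedBall, hs]
    constructor
    · intro h
      have htend : Filter.Tendsto (fun k : ℕ => R + 1 / ((k : ℝ) + 1)) Filter.atTop (nhds R) := by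
        have := tendsto_one_div_add_atTop_nhds_zero_nat (𝕜 := ℝ)
        simpa using Filter.Tendsto.add (tendsto_const_nhds (x := R)) this
      exact ge_of_tendsto' htend h
    · intro h k
      have : (0 : ℝ) < 1 / ((k : ℝ) + 1) := by positivity
      linarith
  have hsub : ∀ k, closedBall y R ⊆ s k := by
    intro k u hu
    simp only [mem_closedBall, hs] at hu ⊢
    have : (0 : ℝ) < 1 / ((k : ℝ) + 1) := by positivity
    linarith
  -- each term of the approximating sequence is bounded by the maximal function
  have hterm : ∀ k : ℕ, I / μ (s k) ≤ uncenteredMaximal μ g z := by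
    intro k
    have h1 : (0 : ℝ) < R + 1 / (k + 1) := by positivity
    have h2 : dist z y < R + 1 / (k + 1) := by
      have : (0 : ℝ) < 1 / ((k : ℝ) + 1) := by positivity
      linarith
    have h3 : 0 < μ (s k) := lt_of_lt_of_le hμR (measure_mono (hsub k))
    calc I / μ (s k) ≤ (∫⁻ u in s k, ‖g u‖₊ ∂μ) / μ (s k) :=
          ENNReal.div_le_div (lintegral_mono_set (hsub k)) le_rfl
      _ ≤ uncenteredMaximal μ g z := by
          rw [uncenteredMaximal]
          exact le_iSup_of_le y (le_iSup_of_le (R + 1 / (k + 1)) (le_iSup_of_le h1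
            (le_iSup_of_le h2 (le_iSup_of_le h3 le_rfl))))
  -- continuity of the measure from above
  have hμtend : Filter.Tendsto (fun k => μ (s k)) Filter.atTop (nhds (μ (closedBall y R))) := by
    have := tendsto_measure_iInter_atTop (μ := μ) (s := s)
      (fun k => measurableSet_closedBall.nullMeasurableSet) hanti
      ⟨0, (hfin _ isBounded_closedBall).ne⟩
    rw [hiInter] at this
    exact this
  have htend : Filter.Tendsto (fun k => I / μ (s k)) Filter.atTop
      (nhds (I / μ (closedBall y R))) :=
    ENNReal.Tendsto.const_div hμtend (Or.inl (hfin _ isBounded_closedBall).ne)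
  exact le_of_tendsto' htend hterm

private lemma sum_indicator_mul_lintegral {X : Type*} [MeasurableSpace X]
    (μ : Measure X) {N : ℕ} (s : Fin N → Set X) (hs : ∀ n, MeasurableSet (s n))
    (c : Fin N → ℝ≥0∞) (h : X → ℝ≥0∞) (hh : Measurable h) :
    ∫⁻ y, (∑ n : Fin N, (s n).indicator (fun _ => c n) y) * h y ∂μ
      = ∑ n : Fin N, c n * ∫⁻ y in s n, h y ∂μ := by
  have heq : ∀ y, (∑ n : Fin N, (s n).indicator (fun _ => c n) y) * h y
      = ∑ n : Fin N, (s n).indicator (fun u => c n * h u) y := by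
    intro y
    rw [Finset.sum_mul]
    refine Finset.sum_congr rfl fun n _ => ?_
    by_cases hy : y ∈ s n <;> simp [Set.indicator_apply, hy]
  calc ∫⁻ y, (∑ n : Fin N, (s n).indicator (fun _ => c n) y) * h y ∂μ
      = ∫⁻ y, ∑ n : Fin N, (s n).indicator (fun u => c n * h u) y ∂μ := by
        congr 1; funext y; exact heq y
    _ = ∑ n : Fin N, ∫⁻ y, (s n).indicator (fun u => c n * h u) y ∂μ :=
        lintegral_finset_sum _ fun n _ => ((hh.const_mul _).indicator (hs n))
    _ = ∑ n : Fin N, c n * ∫⁻ y in s n, h y ∂μ := by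
        refine Finset.sum_congr rfl fun n _ => ?_
        rw [lintegral_indicator (hs n), lintegral_const_mul _ hh]

/-- **Normalized Boman covering lemma.**  If the uncentered maximal operator is bounded on
`L^q(μ)` with constant `C`, then for any finite sequence of closed balls of positive measure,
positive weights `w n` and dilations `t n ≥ 1`,
`‖ Σ w n 1_{B(x n, t n * r n)}/μ(B(x n, t n * r n)) ‖_p ≤ C ‖ Σ w n 1_{B(x n, r n)}/μ(B(x n, r n)) ‖_p`. -/
theorem normalized_boman_covering
    {X : Type*} [MetricSpace X] [MeasurableSpace X] [BorelSpace X]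
    (μ : Measure X) (hμ : μ ≠ 0)
    (hfin : ∀ s : Set X, Bornology.IsBounded s → μ s < ∞)
    (p q : ℝ) (hp : 1 < p) (hq : q = p / (p - 1))
    (C : ℝ≥0∞)
    (hC : ∀ h : X → ℝ, MemLp h (ENNReal.ofReal q) μ →
      lpNorm μ q (uncenteredMaximal μ h) ≤ C * lpNorm μ q (fun x => (‖h x‖₊ : ℝ≥0∞)))
    (N : ℕ) (x : Fin N → X) (r w t : Fin N → ℝ)
    (hr : ∀ n, 0 < r n)
    (hpos : ∀ n, 0 < μ (closedBall (x n) (r n)))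
    (hw : ∀ n, 0 < w n) (ht : ∀ n, 1 ≤ t n) :
    lpNorm μ p (fun y => ∑ n : Fin N, (closedBall (x n) (t n * r n)).indicator
        (fun _ => ENNReal.ofReal (w n) / μ (closedBall (x n) (t n * r n))) y)
      ≤ C * lpNorm μ p (fun y => ∑ n : Fin N, (closedBall (x n) (r n)).indicator
        (fun _ => ENNReal.ofReal (w n) / μ (closedBall (x n) (r n))) y) := by
  classical
  -- basic facts about the exponents
  have hp0 : (0 : ℝ) < p := by linarith
  have hp1 : (0 : ℝ) < p - 1 := by linarith
  have hq1 : 1 < q := by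
    rw [hq, lt_div_iff₀ hp1]; linarith
  have hq0 : (0 : ℝ) < q := by linarith
  have hpq_sum : 1 / p + 1 / q = 1 := by
    rw [hq]; field_simp; ring
  have hpq_mul : (p - 1) * q = p := by
    rw [hq]; field_simp
  have hpq : p.HolderConjugate q := Real.holderConjugate_iff.2 ⟨hp, by rw [← one_div, ← one_div]; exact hpq_sum⟩
  -- notation for the balls and functions
  set B : Fin N → Set X := fun n => closedBall (x n) (r n) with hB
  set B' : Fin N → Set X := fun n => closedBall (x n) (t n * r n) with hB'
  have htr : ∀ n, 0 < t n * r n := fun n =>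
    mul_pos (lt_of_lt_of_le one_pos (ht n)) (hr n)
  have hrr : ∀ n, r n ≤ t n * r n := fun n => le_mul_of_one_le_left (hr n).le (ht n)
  have hsub : ∀ n, B n ⊆ B' n := fun n => closedBall_subset_closedBall (hrr n)
  have hpos' : ∀ n, 0 < μ (B' n) := fun n => lt_of_lt_of_le (hpos n) (measure_mono (hsub n))
  have hfinB' : ∀ n, μ (B' n) < ∞ := fun n => hfin _ isBounded_closedBall
  have hfinB : ∀ n, μ (B n) < ∞ := fun n => hfin _ isBounded_closedBall
  set c : Fin N → ℝ≥0∞ := fun n => ENNReal.ofReal (w n) / μ (B' n) with hc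
  set c' : Fin N → ℝ≥0∞ := fun n => ENNReal.ofReal (w n) / μ (B n) with hc'
  set F : X → ℝ≥0∞ := fun y => ∑ n : Fin N, (B' n).indicator (fun _ => c n) y with hF
  set G : X → ℝ≥0∞ := fun y => ∑ n : Fin N, (B n).indicator (fun _ => c' n) y with hG
  have hcfin : ∀ n, c n < ∞ := fun n => ENNReal.div_lt_top ofReal_ne_top (hpos' n).ne'
  have hFmeas : Measurable F :=
    Finset.measurable_sum _ fun n _ => measurable_const.indicator measurableSet_closedBall
  have hGmeas : Measurable G :=
    Finset.measurable_sum _ fun n _ => measurable_const.indicator measurableSet_closedBall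
  have hFle : ∀ y, F y ≤ ∑ n : Fin N, c n := by
    intro y
    refine Finset.sum_le_sum fun n _ => ?_
    by_cases hy : y ∈ B' n <;> simp [Set.indicator_apply, hy]
  have hFlt : ∀ y, F y < ∞ := fun y =>
    lt_of_le_of_lt (hFle y) (ENNReal.sum_lt_top.2 fun n _ => hcfin n)
  set A : ℝ≥0∞ := ∫⁻ y, F y ^ p ∂μ with hA
  -- trivial case
  by_cases hA0 : A = 0
  · have : lpNorm μ p F = 0 := by
      rw [_root_.lpNorm, ← hA, hA0, ENNReal.zero_rpow_of_pos (by positivity)]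
    rw [show lpNorm μ p (fun y => ∑ n : Fin N, (B' n).indicator (fun _ => c n) y)
        = lpNorm μ p F from rfl, this]
    exact zero_le
  -- A is finite
  have hAtop : A ≠ ∞ := by
    set κ : ℝ≥0∞ := ∑ n : Fin N, c n with hκ
    have hκfin : κ < ∞ := ENNReal.sum_lt_top.2 fun n _ => hcfin n
    have hptwise : ∀ y, F y ^ p ≤ (⋃ n, B' n).indicator (fun _ => κ ^ p) y := by
      intro y
      by_cases hy : y ∈ ⋃ n, B' n
      · rw [Set.indicator_of_mem hy]
        exact ENNReal.rpow_le_rpow (hFle y) hp0.le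
      · have hFy : F y = 0 := by
          refine Finset.sum_eq_zero fun n _ => ?_
          exact Set.indicator_of_notMem (fun h => hy (Set.mem_iUnion.2 ⟨n, h⟩)) _
        rw [Set.indicator_of_notMem hy, hFy, ENNReal.zero_rpow_of_pos hp0]
      -- done
    have hU : MeasurableSet (⋃ n, B' n) :=
      MeasurableSet.iUnion fun n => measurableSet_closedBall
    have : A ≤ κ ^ p * μ (⋃ n, B' n) := by
      calc A ≤ ∫⁻ y, (⋃ n, B' n).indicator (fun _ => κ ^ p) y ∂μ :=
            lintegral_mono hptwise
        _ = κ ^ p * μ (⋃ n, B' n) := by rw [lintegral_indicator hU, setLIntegral_const]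
    refine (lt_of_le_of_lt this ?_).ne
    have h1 : κ ^ p < ∞ := ENNReal.rpow_lt_top_of_nonneg hp0.le hκfin.ne
    have h2 : μ (⋃ n, B' n) < ∞ := by
      refine lt_of_le_of_lt (measure_iUnion_le _) ?_
      rw [tsum_fintype]
      exact ENNReal.sum_lt_top.2 fun n _ => hfinB' n
    exact ENNReal.mul_lt_top h1 h2
  -- the dual test function
  set g : X → ℝ := fun y => (F y ^ (p - 1)).toReal with hg
  have hFp1top : ∀ y, F y ^ (p - 1) ≠ ∞ := fun y =>
    (ENNReal.rpow_lt_top_of_nonneg hp1.le (hFlt y).ne).ne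
  have hgmeas : Measurable g := (hFmeas.pow_const _).ennreal_toReal
  have hcoe : ∀ y, (‖g y‖₊ : ℝ≥0∞) = F y ^ (p - 1) := by
    intro y
    rw [← enorm_eq_nnnorm, ← ofReal_norm_eq_enorm, Real.norm_of_nonneg ENNReal.toReal_nonneg,
      ENNReal.ofReal_toReal (hFp1top y)]
  have hgq : ∫⁻ y, (‖g y‖₊ : ℝ≥0∞) ^ q ∂μ = A := by
    rw [hA]
    congr 1
    funext y
    rw [hcoe y, ← ENNReal.rpow_mul, hpq_mul]
  -- membership of g in L^q
  have hgmem : MemLp g (ENNReal.ofReal q) μ := by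
    refine ⟨hgmeas.aestronglyMeasurable, ?_⟩
    rw [eLpNorm_eq_lintegral_rpow_enorm_toReal (ne_of_gt (ENNReal.ofReal_pos.2 hq0)) (by simp),
      ENNReal.toReal_ofReal hq0.le]
    rw [show (fun y => (‖g y‖₊ : ℝ≥0∞) ^ q) = fun y => (‖g y‖₊ : ℝ≥0∞) ^ q from rfl] at hgq
    simp only [enorm_eq_nnnorm]
    rw [hgq]
    exact ENNReal.rpow_lt_top_of_nonneg (by positivity) hAtop
  -- maximal function bound from the hypothesis
  have hMmeas : Measurable (uncenteredMaximal μ g) := measurable_uncenteredMaximal μ g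
  have hCg : lpNorm μ q (uncenteredMaximal μ g) ≤ C * A ^ (1 / q) := by
    have := hC g hgmem
    rwa [show lpNorm μ q (fun y => (‖g y‖₊ : ℝ≥0∞)) = A ^ (1 / q) by
      rw [_root_.lpNorm, hgq]] at this
  -- the main chain of inequalities
  have hmul : ∀ a : ℝ≥0∞, a * a ^ (p - 1) = a ^ p := by
    intro a
    have h : a ^ p = a ^ (1 + (p - 1)) := by norm_num
    rw [h, ENNReal.rpow_add_of_nonneg _ _ zero_le_one hp1.le, ENNReal.rpow_one]
  have key : A ≤ lpNorm μ p G * (C * A ^ (1 / q)) := by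
    have step1 : A = ∑ n : Fin N, c n * ∫⁻ y in B' n, F y ^ (p - 1) ∂μ := by
      rw [hA]
      rw [show (fun y => F y ^ p) = fun y => F y * F y ^ (p - 1) by
        funext y; rw [hmul (F y)]]
      exact sum_indicator_mul_lintegral μ B' (fun n => measurableSet_closedBall) c
        (fun y => F y ^ (p - 1)) (hFmeas.pow_const _)
    have step2 : ∀ n, c n * ∫⁻ y in B' n, F y ^ (p - 1) ∂μ
        ≤ c' n * ∫⁻ y in B n, uncenteredMaximal μ g y ∂μ := by
      intro n
      set I : ℝ≥0∞ := ∫⁻ y in B' n, F y ^ (p - 1) ∂μ with hIdef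
      have hIg : I = ∫⁻ u in B' n, (‖g u‖₊ : ℝ≥0∞) ∂μ := by
        rw [hIdef]; congr 1; funext u; rw [hcoe u]
      set avg : ℝ≥0∞ := I / μ (B' n) with havgdef
      have havgM : ∀ z ∈ B n, avg ≤ uncenteredMaximal μ g z := by
        intro z hz
        rw [havgdef, hIg]
        exact avg_le_uncenteredMaximal μ hfin g (htr n) (hpos' n)
          (le_trans (mem_closedBall.1 hz) (hrr n))
      have h1 : avg * μ (B n) ≤ ∫⁻ y in B n, uncenteredMaximal μ g y ∂μ := by
        rw [← setLIntegral_const]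
        exact setLIntegral_mono hMmeas havgM
      have hb0 : μ (B n) ≠ 0 := (hpos n).ne'
      have hbt : μ (B n) ≠ ∞ := (hfinB n).ne
      calc c n * I = ENNReal.ofReal (w n) * avg := by
            simp only [hc, havgdef, div_eq_mul_inv]; ring
        _ = c' n * (avg * μ (B n)) := by
            simp only [hc']
            rw [show ENNReal.ofReal (w n) / μ (B n) * (avg * μ (B n))
              = avg * (ENNReal.ofReal (w n) / μ (B n) * μ (B n)) by ring,
              ENNReal.div_mul_cancel hb0 hbt]
            ring
        _ ≤ c' n * ∫⁻ y in B n, uncenteredMaximal μ g y ∂μ := mul_le_mul_right h1 _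
    have step3 : ∑ n : Fin N, c' n * ∫⁻ y in B n, uncenteredMaximal μ g y ∂μ
        = ∫⁻ y, G y * uncenteredMaximal μ g y ∂μ :=
      (sum_indicator_mul_lintegral μ B (fun n => measurableSet_closedBall) c'
        (uncenteredMaximal μ g) hMmeas).symm
    calc A = ∑ n : Fin N, c n * ∫⁻ y in B' n, F y ^ (p - 1) ∂μ := step1
      _ ≤ ∑ n : Fin N, c' n * ∫⁻ y in B n, uncenteredMaximal μ g y ∂μ :=
          Finset.sum_le_sum fun n _ => step2 n
      _ = ∫⁻ y, G y * uncenteredMaximal μ g y ∂μ := step3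
      _ ≤ (∫⁻ y, G y ^ p ∂μ) ^ (1 / p) * (∫⁻ y, uncenteredMaximal μ g y ^ q ∂μ) ^ (1 / q) :=
          ENNReal.lintegral_mul_le_Lp_mul_Lq μ hpq hGmeas.aemeasurable hMmeas.aemeasurable
      _ = lpNorm μ p G * lpNorm μ q (uncenteredMaximal μ g) := rfl
      _ ≤ lpNorm μ p G * (C * A ^ (1 / q)) := mul_le_mul_right hCg _
  -- conclude by dividing by A^{1/q}
  have hfinal : A ^ (1 / p) ≤ C * lpNorm μ p G := by
    have h1 : A ^ (1 / p) = A / A ^ (1 / q) := by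
      rw [show (1 : ℝ) / p = 1 - 1 / q by linarith,
        ENNReal.rpow_sub _ _ hA0 hAtop, ENNReal.rpow_one]
    rw [h1]
    apply ENNReal.div_le_of_le_mul
    calc A ≤ lpNorm μ p G * (C * A ^ (1 / q)) := key
      _ = C * lpNorm μ p G * A ^ (1 / q) := by ring
  calc lpNorm μ p (fun y => ∑ n : Fin N, (B' n).indicator (fun _ => c n) y)
      = A ^ (1 / p) := rfl
    _ ≤ C * lpNorm μ p G := hfinal

end
end

section
/- Let (X,d,μ) be a metric measure space, let 1 < p < ∞ and let q = p/(p-1) be the conjugate exponent. Let R > 0 and suppose C ≥ 0 is a constant such that ‖M^u_{{R<r},μ} h‖_{L^q(μ)} ≤ C‖h‖_{L^q(μ)} for every h ∈ L^q(μ). Then for every finite sequence of closed balls B^cl(x_n, r_n), 1 ≤ n ≤ N, with r_n > R, every finite sequence of measurable sets E_n with μ(E_n) > 0 and E_n ⊆ B^cl(x_n, r_n), and every finite sequence of weights w_n > 0, one has ‖ Σ_{n=1}^N w_n · 1_{B^cl(x_n, r_n)} / μ(B^cl(x_n, r_n)) ‖_{L^p(μ)} ≤ C · ‖ Σ_{n=1}^N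 w_n · 1_{E_n} / μ(E_n) ‖_{L^p(μ)}. -/
open MeasureTheory Metric ENNReal Set

noncomputable section

/-- The uncentered Hardy–Littlewood maximal operator localized at radii larger than `R`:
`M^u_{{R<r},μ} g(x) = sup { (1/μ(B^cl(y,r))) ∫_{B^cl(y,r)} |g| dμ : r > R, d(x,y) < r,
μ(B^cl(y,r)) > 0 }`. -/
def localizedUncenteredMaximal {X : Type*} [MetricSpace X] [MeasurableSpace X]
    (μ : Measure X) (R : ℝ) (g : X → ℝ) (x : X) : ℝ≥0∞ :=
  ⨆ (y : X) (r : ℝ) (_ : R < r) (_ : dist x y < r) (_ : 0 < μ (closedBall y r)),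
    (∫⁻ z in closedBall y r, ‖g z‖₊ ∂μ) / μ (closedBall y r)

section Aux

variable {X : Type*} [MetricSpace X] [MeasurableSpace X] [BorelSpace X]

/-- Any average at a ball of radius `> R` containing `z` (with strict or non-strict distance)
is dominated by the localized maximal function at `z`. -/
lemma avg_le_localizedUncenteredMaximal (μ : Measure X) (R : ℝ) (g : X → ℝ)
    {x₀ : X} {r₀ : ℝ} (hRr : R < r₀)
    (hfin : μ (closedBall x₀ (r₀ + 1)) ≠ ∞)
    (hν : ∫⁻ z, (‖g z‖₊ : ℝ≥0∞) ∂μ ≠ ∞)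
    (hpos : 0 < μ (closedBall x₀ r₀)) {z : X} (hz : dist z x₀ ≤ r₀) :
    (∫⁻ u in closedBall x₀ r₀, (‖g u‖₊ : ℝ≥0∞) ∂μ) / μ (closedBall x₀ r₀)
      ≤ localizedUncenteredMaximal μ R g z := by
  set ν : Measure X := μ.withDensity (fun u => (‖g u‖₊ : ℝ≥0∞)) with hνdef
  have hνball : ∀ s : ℝ, ν (closedBall x₀ s) = ∫⁻ u in closedBall x₀ s, (‖g u‖₊ : ℝ≥0∞) ∂μ :=
    fun s => withDensity_apply _ measurableSet_closedBall
  have hνfin : ∀ t : Set X, ν t ≠ ∞ := by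
    intro t
    refine ((measure_mono (subset_univ t)).trans_lt ?_).ne
    rw [hνdef, withDensity_apply _ MeasurableSet.univ, Measure.restrict_univ]
    exact hν.lt_top
  set s : ℕ → Set X := fun k => closedBall x₀ (r₀ + 1 / (k + 1)) with hs
  have hrk : ∀ k : ℕ, (0:ℝ) < 1 / (k + 1) := by
    intro k; positivity
  have hrk1 : ∀ k : ℕ, (1:ℝ) / (k + 1) ≤ 1 := by
    intro k
    rw [div_le_one (by positivity)]
    have : (0:ℝ) ≤ (k:ℝ) := Nat.cast_nonneg k
    linarith
  have hanti : Antitone s := by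
    intro i j hij
    apply closedBall_subset_closedBall
    have : (1:ℝ) / (j + 1) ≤ 1 / (i + 1) := by
      apply one_div_le_one_div_of_le (by positivity)
      have : (i:ℝ) ≤ (j:ℝ) := Nat.cast_le.mpr hij
      linarith
    linarith
  have hinter : ⋂ k, s k = closedBall x₀ r₀ := by
    apply Subset.antisymm
    · intro y hy
      simp only [mem_iInter, hs, mem_closedBall] at hy ⊢
      refine le_of_forall_pos_le_add fun ε hε => ?_
      obtain ⟨k, hk⟩ := exists_nat_one_div_lt hε
      exact (hy k).trans (by linarith)
    · intro y hy
      simp only [mem_iInter, hs, mem_closedBall] at hy ⊢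
      intro k
      have := hrk k
      linarith
  have hfinsk : ∀ k, μ (s k) ≠ ∞ := by
    intro k
    refine ((measure_mono (closedBall_subset_closedBall ?_)).trans_lt hfin.lt_top).ne
    have := hrk1 k; linarith
  have hμt : Filter.Tendsto (fun k => μ (s k)) Filter.atTop (nhds (μ (closedBall x₀ r₀))) := by
    rw [← hinter]
    exact tendsto_measure_iInter_atTop
      (fun k => measurableSet_closedBall.nullMeasurableSet) hanti ⟨0, hfinsk 0⟩
  have hνt : Filter.Tendsto (fun k => ν (s k)) Filter.atTop (nhds (ν (closedBall x₀ r₀))) := by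
    rw [← hinter]
    exact tendsto_measure_iInter_atTop
      (fun k => measurableSet_closedBall.nullMeasurableSet) hanti ⟨0, hνfin _⟩
  have hμr₀fin : μ (closedBall x₀ r₀) ≠ ∞ := by
    refine ((measure_mono (closedBall_subset_closedBall (by linarith))).trans_lt hfin.lt_top).ne
  have htend : Filter.Tendsto (fun k => ν (s k) / μ (s k)) Filter.atTop
      (nhds (ν (closedBall x₀ r₀) / μ (closedBall x₀ r₀))) :=
    ENNReal.Tendsto.div hνt (Or.inr hpos.ne') hμt (Or.inl hμr₀fin)
  have hle : ∀ k, ν (s k) / μ (s k) ≤ localizedUncenteredMaximal μ R g z := by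
    intro k
    have h1 : R < r₀ + 1 / (k + 1) := by have := hrk k; linarith
    have h2 : dist z x₀ < r₀ + 1 / (k + 1) := by have := hrk k; linarith
    have h3 : 0 < μ (s k) := by
      refine hpos.trans_le (measure_mono (closedBall_subset_closedBall ?_))
      have := hrk k; linarith
    rw [localizedUncenteredMaximal]
    refine le_iSup_of_le x₀ (le_iSup_of_le (r₀ + 1 / (k + 1)) (le_iSup_of_le h1
      (le_iSup_of_le h2 (le_iSup_of_le h3 ?_))))
    rw [hs] at h3 ⊢
    rw [hνball]
  have := le_of_tendsto htend (Filter.Eventually.of_forall hle)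
  rwa [hνball] at this

/-- The localized uncentered maximal function is lower semicontinuous, hence measurable. -/
lemma measurable_localizedUncenteredMaximal (μ : Measure X) (R : ℝ) (g : X → ℝ) :
    Measurable (localizedUncenteredMaximal μ R g) := by
  have hlsc : LowerSemicontinuous (localizedUncenteredMaximal μ R g) := by
    intro x t ht
    rw [localizedUncenteredMaximal] at ht
    simp only [lt_iSup_iff] at ht
    obtain ⟨y, ρ, h1, h2, h3, hlt⟩ := ht
    filter_upwards [isOpen_ball.mem_nhds (mem_ball.mpr h2)] with x' hx'
    refine hlt.trans_le ?_
    rw [localizedUncenteredMaximal]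
    exact le_iSup_of_le y (le_iSup_of_le ρ (le_iSup_of_le h1
      (le_iSup_of_le (mem_ball.mp hx') (le_iSup_of_le h3 le_rfl))))
  exact hlsc.measurable

/-- Interchange of a finite sum of scaled indicators with a lintegral. -/
lemma lintegral_sum_indicator_mul {N : ℕ} (μ : Measure X) (s : Fin N → Set X)
    (hs : ∀ n, MeasurableSet (s n)) (c : Fin N → ℝ≥0∞) (hc : ∀ n, c n ≠ ∞)
    (h : X → ℝ≥0∞) (hh : Measurable h) :
    ∫⁻ y, (∑ n : Fin N, (s n).indicator (fun _ => c n) y) * h y ∂μ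
      = ∑ n : Fin N, c n * ∫⁻ u in s n, h u ∂μ := by
  have heq : ∀ y, (∑ n : Fin N, (s n).indicator (fun _ => c n) y) * h y
      = ∑ n : Fin N, (s n).indicator (fun u => c n * h u) y := by
    intro y
    rw [Finset.sum_mul]
    refine Finset.sum_congr rfl fun n _ => ?_
    by_cases hy : y ∈ s n <;> simp [Set.indicator_apply, hy]
  rw [lintegral_congr heq, lintegral_finset_sum _
    (fun n _ => (hh.const_mul (c n)).indicator (hs n))]
  refine Finset.sum_congr rfl fun n _ => ?_
  rw [lintegral_indicator (hs n), lintegral_const_mul' _ _ (hc n)]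

lemma div_mul_comm_ennreal (c d e : ℝ≥0∞) : c / d * e = c * (e / d) := by
  rw [div_eq_mul_inv, div_eq_mul_inv, mul_right_comm, mul_assoc]

end Aux

/-- **Generalized Boman covering lemma.**  If the uncentered maximal operator localized at radii
larger than `R` is bounded on `L^q(μ)` with constant `C`, then for any finite sequence of closed
balls with radii `r n > R`, sets `E n ⊆ B^cl(x n, r n)` of positive measure, and positive weights,
`‖ Σ w n 1_{B(x n, r n)}/μ(B(x n, r n)) ‖_p ≤ C ‖ Σ w n 1_{E n}/μ(E n) ‖_p`. -/
theorem generalized_boman_covering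
    {X : Type*} [MetricSpace X] [MeasurableSpace X] [BorelSpace X]
    (μ : Measure X) (hμ : μ ≠ 0)
    (hfin : ∀ s : Set X, Bornology.IsBounded s → μ s < ∞)
    (p q : ℝ) (hp : 1 < p) (hq : q = p / (p - 1))
    (R : ℝ) (hR : 0 < R)
    (C : ℝ≥0∞)
    (hC : ∀ h : X → ℝ, MemLp h (ENNReal.ofReal q) μ →
      lpNorm μ q (localizedUncenteredMaximal μ R h) ≤ C * lpNorm μ q (fun x => (‖h x‖₊ : ℝ≥0∞)))
    (N : ℕ) (x : Fin N → X) (r w : Fin N → ℝ) (E : Fin N → Set X)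
    (hr : ∀ n, R < r n)
    (hE : ∀ n, MeasurableSet (E n))
    (hEpos : ∀ n, 0 < μ (E n))
    (hEsub : ∀ n, E n ⊆ closedBall (x n) (r n))
    (hw : ∀ n, 0 < w n) :
    lpNorm μ p (fun y => ∑ n : Fin N, (closedBall (x n) (r n)).indicator
        (fun _ => ENNReal.ofReal (w n) / μ (closedBall (x n) (r n))) y)
      ≤ C * lpNorm μ p (fun y => ∑ n : Fin N, (E n).indicator
        (fun _ => ENNReal.ofReal (w n) / μ (E n)) y) := by
  classical
  set F : X → ℝ≥0∞ := fun y => ∑ n : Fin N, (closedBall (x n) (r n)).indicator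
      (fun _ => ENNReal.ofReal (w n) / μ (closedBall (x n) (r n))) y with hF
  set G : X → ℝ≥0∞ := fun y => ∑ n : Fin N, (E n).indicator
      (fun _ => ENNReal.ofReal (w n) / μ (E n)) y with hG
  have hBmeas : ∀ n, MeasurableSet (closedBall (x n) (r n)) := fun n => measurableSet_closedBall
  have hBpos : ∀ n, 0 < μ (closedBall (x n) (r n)) :=
    fun n => (hEpos n).trans_le (measure_mono (hEsub n))
  have hBfin : ∀ n, μ (closedBall (x n) (r n)) ≠ ∞ :=
    fun n => (hfin _ isBounded_closedBall).ne
  have hEfin : ∀ n, μ (E n) ≠ ∞ :=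
    fun n => ((measure_mono (hEsub n)).trans_lt (hfin _ isBounded_closedBall)).ne
  have hcB : ∀ n, ENNReal.ofReal (w n) / μ (closedBall (x n) (r n)) ≠ ∞ :=
    fun n => (ENNReal.div_lt_top ofReal_ne_top (hBpos n).ne').ne
  have hcE : ∀ n, ENNReal.ofReal (w n) / μ (E n) ≠ ∞ :=
    fun n => (ENNReal.div_lt_top ofReal_ne_top (hEpos n).ne').ne
  have hFmeas : Measurable F :=
    Finset.measurable_sum _ (fun n _ => measurable_const.indicator (hBmeas n))
  have hGmeas : Measurable G :=
    Finset.measurable_sum _ (fun n _ => measurable_const.indicator (hE n))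
  set Mc : ℝ≥0∞ := ∑ n : Fin N, ENNReal.ofReal (w n) / μ (closedBall (x n) (r n)) with hMc
  have hMcfin : Mc ≠ ∞ := by
    rw [hMc]
    exact (ENNReal.sum_lt_top.mpr fun n _ => (hcB n).lt_top).ne
  have hFle : ∀ y, F y ≤ Mc := by
    intro y
    rw [hF, hMc]
    refine Finset.sum_le_sum fun n _ => ?_
    by_cases h : y ∈ closedBall (x n) (r n) <;> simp [Set.indicator_apply, h]
  have hFzero : ∀ y, y ∉ (⋃ n, closedBall (x n) (r n)) → F y = 0 := by
    intro y hy
    rw [hF]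
    exact Finset.sum_eq_zero fun n _ =>
      Set.indicator_of_notMem (fun h => hy (mem_iUnion.mpr ⟨n, h⟩)) _
  have hFne : ∀ y, F y ≠ ∞ := fun y => ((hFle y).trans_lt hMcfin.lt_top).ne
  have hp0 : (0:ℝ) < p := lt_trans one_pos hp
  have hp1 : (0:ℝ) < p - 1 := sub_pos.2 hp
  have hpq : p.HolderConjugate q := (Real.holderConjugate_iff_eq_conjExponent hp).mpr hq
  have hq0 : (0:ℝ) < q := hpq.symm.pos
  have hUfin : μ (⋃ n, closedBall (x n) (r n)) < ∞ :=
    (measure_iUnion_fintype_le μ _).trans_lt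
      (ENNReal.sum_lt_top.mpr fun n _ => (hBfin n).lt_top)
  set I : ℝ≥0∞ := ∫⁻ y, F y ^ p ∂μ with hI
  have hIfin : I ≠ ∞ := by
    have hle : ∀ y, F y ^ p ≤ (⋃ n, closedBall (x n) (r n)).indicator (fun _ => Mc ^ p) y := by
      intro y
      by_cases hy : y ∈ ⋃ n, closedBall (x n) (r n)
      · rw [Set.indicator_of_mem hy]
        exact ENNReal.rpow_le_rpow (hFle y) hp0.le
      · rw [Set.indicator_of_notMem hy, hFzero y hy, ENNReal.zero_rpow_of_pos hp0]
    refine ((lintegral_mono hle).trans_lt ?_).ne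
    rw [lintegral_indicator_const (MeasurableSet.iUnion hBmeas)]
    exact ENNReal.mul_lt_top (ENNReal.rpow_lt_top_of_nonneg hp0.le hMcfin) hUfin
  rcases eq_or_ne I 0 with hI0 | hI0
  · have hz : lpNorm μ p F = 0 := by
      rw [_root_.lpNorm, ← hI, hI0, ENNReal.zero_rpow_of_pos (by positivity)]
    rw [hz]
    exact zero_le
  -- main case
  set g : X → ℝ := fun y => (F y ^ (p - 1)).toReal with hg
  have hgmeas : Measurable g := (hFmeas.pow_const _).ennreal_toReal
  have hgkey : ∀ y, (‖g y‖₊ : ℝ≥0∞) = F y ^ (p - 1) := by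
    intro y
    have h1 : F y ^ (p - 1) ≠ ∞ := ENNReal.rpow_ne_top_of_nonneg hp1.le (hFne y)
    rw [hg]
    simp only
    change ‖(F y ^ (p - 1)).toReal‖ₑ = _
    rw [Real.enorm_eq_ofReal ENNReal.toReal_nonneg, ENNReal.ofReal_toReal h1]
  have hgint : ∫⁻ z, (‖g z‖₊ : ℝ≥0∞) ∂μ ≠ ∞ := by
    have hle : ∀ z, (‖g z‖₊ : ℝ≥0∞)
        ≤ (⋃ n, closedBall (x n) (r n)).indicator (fun _ => Mc ^ (p - 1)) z := by
      intro z
      rw [hgkey z]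
      by_cases hz : z ∈ ⋃ n, closedBall (x n) (r n)
      · rw [Set.indicator_of_mem hz]
        exact ENNReal.rpow_le_rpow (hFle z) hp1.le
      · rw [Set.indicator_of_notMem hz, hFzero z hz, ENNReal.zero_rpow_of_pos hp1]
    refine ((lintegral_mono hle).trans_lt ?_).ne
    rw [lintegral_indicator_const (MeasurableSet.iUnion hBmeas)]
    exact ENNReal.mul_lt_top (ENNReal.rpow_lt_top_of_nonneg hp1.le hMcfin) hUfin
  have hqint : ∫⁻ z, (‖g z‖₊ : ℝ≥0∞) ^ q ∂μ = I := by
    rw [hI]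
    refine lintegral_congr fun z => ?_
    rw [hgkey z, ← ENNReal.rpow_mul, hpq.sub_one_mul_conj]
  have hofq : ENNReal.ofReal q ≠ 0 := by
    simp only [ne_eq, ENNReal.ofReal_eq_zero, not_le]
    exact hq0
  have hgmem : MemLp g (ENNReal.ofReal q) μ := by
    constructor
    · exact hgmeas.aestronglyMeasurable
    · rw [eLpNorm_eq_lintegral_rpow_enorm_toReal hofq ENNReal.ofReal_ne_top]
      simp only [ENNReal.toReal_ofReal hq0.le]
      rw [show ∫⁻ z, ‖g z‖ₑ ^ q ∂μ = I from hqint]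
      exact ENNReal.rpow_lt_top_of_nonneg (by positivity) hIfin
  have hMgnorm : lpNorm μ q (localizedUncenteredMaximal μ R g) ≤ C * I ^ (1 / q) := by
    have h := hC g hgmem
    have heq : lpNorm μ q (fun z => (‖g z‖₊ : ℝ≥0∞)) = I ^ (1 / q) := by
      rw [_root_.lpNorm, hqint]
    rwa [heq] at h
  set Mg : X → ℝ≥0∞ := localizedUncenteredMaximal μ R g with hMg
  have hMgmeas : Measurable Mg := measurable_localizedUncenteredMaximal μ R g
  -- Step B : I ≤ ∫ G * Mg
  have step1 : I ≤ ∫⁻ y, G y * Mg y ∂μ := by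
    have hFg : ∀ y, F y ^ p = F y * (‖g y‖₊ : ℝ≥0∞) := by
      intro y
      have haux : F y * F y ^ (p - 1) = F y ^ (1 + (p - 1)) := by
        rw [ENNReal.rpow_add_of_nonneg _ _ zero_le_one hp1.le, ENNReal.rpow_one]
      rw [hgkey y, haux]
      congr 1
      ring
    calc I = ∫⁻ y, F y * (‖g y‖₊ : ℝ≥0∞) ∂μ := lintegral_congr fun y => hFg y
      _ = ∑ n : Fin N, (ENNReal.ofReal (w n) / μ (closedBall (x n) (r n)))
            * ∫⁻ u in closedBall (x n) (r n), (‖g u‖₊ : ℝ≥0∞) ∂μ := by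
          rw [hF]
          exact lintegral_sum_indicator_mul μ _ hBmeas _ hcB _
            (hgmeas.nnnorm.coe_nnreal_ennreal)
      _ ≤ ∑ n : Fin N, (ENNReal.ofReal (w n) / μ (E n)) * ∫⁻ u in E n, Mg u ∂μ := by
          refine Finset.sum_le_sum fun n _ => ?_
          set a : ℝ≥0∞ := (∫⁻ u in closedBall (x n) (r n), (‖g u‖₊ : ℝ≥0∞) ∂μ)
            / μ (closedBall (x n) (r n)) with ha
          have havg : ∀ z ∈ E n, a ≤ Mg z := by
            intro z hz
            exact avg_le_localizedUncenteredMaximal μ R g (hr n)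
              (hfin _ isBounded_closedBall).ne hgint (hBpos n) (mem_closedBall.mp (hEsub n hz))
          have h1 : a * μ (E n) ≤ ∫⁻ u in E n, Mg u ∂μ := by
            rw [← setLIntegral_const (E n) a]
            exact setLIntegral_mono hMgmeas havg
          have h2 : a ≤ (∫⁻ u in E n, Mg u ∂μ) / μ (E n) :=
            (ENNReal.le_div_iff_mul_le (Or.inl (hEpos n).ne') (Or.inl (hEfin n))).mpr h1
          calc (ENNReal.ofReal (w n) / μ (closedBall (x n) (r n)))
                * ∫⁻ u in closedBall (x n) (r n), (‖g u‖₊ : ℝ≥0∞) ∂μ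
              = ENNReal.ofReal (w n) * a := div_mul_comm_ennreal _ _ _
            _ ≤ ENNReal.ofReal (w n) * ((∫⁻ u in E n, Mg u ∂μ) / μ (E n)) :=
                mul_le_mul_right h2 _
            _ = (ENNReal.ofReal (w n) / μ (E n)) * ∫⁻ u in E n, Mg u ∂μ :=
                (div_mul_comm_ennreal _ _ _).symm
      _ = ∫⁻ y, G y * Mg y ∂μ := by
          rw [hG]
          exact (lintegral_sum_indicator_mul μ _ hE _ hcE _ hMgmeas).symm
  -- Step C : Hölder
  have step2 : ∫⁻ y, G y * Mg y ∂μ ≤ lpNorm μ p G * (C * I ^ (1 / q)) := by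
    have hhold := ENNReal.lintegral_mul_le_Lp_mul_Lq μ hpq hGmeas.aemeasurable
      hMgmeas.aemeasurable
    have h2 : (∫⁻ y, Mg y ^ q ∂μ) ^ (1 / q) ≤ C * I ^ (1 / q) := by
      have : lpNorm μ q Mg = (∫⁻ y, Mg y ^ q ∂μ) ^ (1 / q) := rfl
      rw [← this]
      exact hMgnorm
    calc ∫⁻ y, G y * Mg y ∂μ = ∫⁻ y, (G * Mg) y ∂μ := rfl
      _ ≤ (∫⁻ y, G y ^ p ∂μ) ^ (1 / p) * (∫⁻ y, Mg y ^ q ∂μ) ^ (1 / q) := hhold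
      _ ≤ lpNorm μ p G * (C * I ^ (1 / q)) := by
          rw [_root_.lpNorm]
          exact mul_le_mul_right h2 _
  have key : I ≤ lpNorm μ p G * (C * I ^ (1 / q)) := step1.trans step2
  have hIq0 : I ^ (1 / q) ≠ 0 := by
    simp only [ne_eq, ENNReal.rpow_eq_zero_iff, not_or, not_and, not_lt]
    constructor
    · intro h; exact absurd h hI0
    · intro h; exact absurd h hIfin
  have hIqt : I ^ (1 / q) ≠ ∞ := ENNReal.rpow_ne_top_of_nonneg (by positivity) hIfin
  have hsplit : I ^ (1 / p) * I ^ (1 / q) = I := by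
    rw [← ENNReal.rpow_add _ _ hI0 hIfin]
    rw [show 1 / p + 1 / q = 1 by rw [one_div, one_div]; exact hpq.inv_add_inv_eq_one]
    exact ENNReal.rpow_one I
  have hfinal : I ^ (1 / p) ≤ C * lpNorm μ p G := by
    rw [← ENNReal.mul_le_mul_iff_left hIq0 hIqt, hsplit]
    calc I ≤ lpNorm μ p G * (C * I ^ (1 / q)) := key
      _ = C * lpNorm μ p G * I ^ (1 / q) := by ring
  have hlpF : lpNorm μ p F = I ^ (1 / p) := by rw [_root_.lpNorm, ← hI]
  rw [hlpF]
  exact hfinal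

end
end

section
/- Let (X,d,μ) be a metric measure space with μ doubling, let 1 < p < ∞, q = p/(p-1), and let t ≥ 1. Suppose C ≥ 0 is a constant such that ‖M^{ut}_μ h‖_{L^q(μ)} ≤ C‖h‖_{L^q(μ)} for every h ∈ L^q(μ). Then for every finite sequence of closed balls B^cl(x_n, r_n), 1 ≤ n ≤ N, every finite sequence of weights w_n > 0, and every finite sequence of dilations t_n with 1 ≤ t_n ≤ t, one has ‖ Σ_{n=1}^N w_n · 1_{B^cl(x_n, r_n)} / μ(B^cl(x_n, r_n)) ‖_{L^p(μ)} ≤ C · ‖ Σ_{n=1}^N w_n · 1_{B^cl(x_n, t_n r_n)} / μ(B^cl(x_n, t_n r_n)) ‖_{L^p(μ)}. -/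
open MeasureTheory Metric ENNReal Set Filter Topology

noncomputable section

/-- The expanded uncentered maximal operator `M^{ut}_μ`. -/
def expandedUncenteredMaximal {X : Type*} [MetricSpace X] [MeasurableSpace X]
    (μ : Measure X) (t : ℝ) (g : X → ℝ) (x : X) : ℝ≥0∞ :=
  ⨆ (y : X) (r : ℝ) (_ : 0 < r) (_ : dist x y < t * r) (_ : 0 < μ (closedBall y r)),
    (∫⁻ z in closedBall y (t * r), ‖g z‖₊ ∂μ) / μ (closedBall y r)

section AuxRB

variable {X : Type*} [MetricSpace X] [MeasurableSpace X] [BorelSpace X]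

lemma rb_ball_pos (μ : Measure X) (hμ : μ ≠ 0)
    (hdoub : ∃ Cd : ℝ≥0∞, 1 ≤ Cd ∧ ∀ (x : X) (r : ℝ), 0 < r →
      μ (ball x (2 * r)) ≤ Cd * μ (ball x r) ∧ μ (ball x r) < ∞) :
    ∀ (y : X) (s : ℝ), 0 < s → 0 < μ (closedBall y s) := by
  obtain ⟨Cd, -, hCd⟩ := hdoub
  intro y s hs
  by_contra hzero
  push_neg at hzero
  have hcb : μ (closedBall y s) = 0 := le_antisymm hzero (zero_le)
  have h0 : μ (ball y s) = 0 :=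
    le_antisymm (le_trans (measure_mono ball_subset_closedBall) hcb.le) (zero_le)
  have hk : ∀ k : ℕ, μ (ball y (2 ^ k * s)) = 0 := by
    intro k
    induction k with
    | zero => simpa using h0
    | succ k ih =>
      have h2 : (2 : ℝ) ^ (k + 1) * s = 2 * (2 ^ k * s) := by ring
      have := (hCd y (2 ^ k * s) (by positivity)).1
      rw [h2]
      exact le_antisymm (by simpa [ih] using this) (zero_le)
  have huniv : μ Set.univ = 0 := by
    have hsub : Set.univ ⊆ ⋃ k : ℕ, ball y (2 ^ k * s) := by
      intro z _
      obtain ⟨k, hk'⟩ := pow_unbounded_of_one_lt ((dist z y + 1) / s) (one_lt_two (α := ℝ))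
      have : dist z y < 2 ^ k * s := by
        rw [div_lt_iff₀ hs] at hk'
        nlinarith
      exact Set.mem_iUnion.2 ⟨k, by simpa [mem_ball] using this⟩
    have hm2 := measure_mono (μ := μ) hsub
    have hle : μ (⋃ k : ℕ, ball y (2 ^ k * s)) ≤ ∑' k : ℕ, μ (ball y (2 ^ k * s)) :=
      measure_iUnion_le (μ := μ) _
    simp only [hk, tsum_zero] at hle
    exact le_antisymm (hm2.trans hle) (zero_le)
  exact hμ (Measure.measure_univ_eq_zero.mp huniv)

lemma rb_maximal_measurable (μ : Measure X) (t : ℝ) (g : X → ℝ) :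
    Measurable (expandedUncenteredMaximal μ t g) := by
  apply measurable_of_Ioi
  intro c
  have hopen : IsOpen {x | c < expandedUncenteredMaximal μ t g x} := by
    rw [Metric.isOpen_iff]
    intro x hx
    simp only [Set.mem_setOf_eq, expandedUncenteredMaximal, lt_iSup_iff] at hx
    obtain ⟨y, r, hr, hxy, hpos, hval⟩ := hx
    refine ⟨t * r - dist x y, by linarith, fun x' hx' => ?_⟩
    rw [mem_ball] at hx'
    have hd : dist x' y < t * r := by
      have htri := dist_triangle x' x y
      linarith
    simp only [Set.mem_setOf_eq, expandedUncenteredMaximal, lt_iSup_iff]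
    exact ⟨y, r, hr, hd, hpos, hval⟩
  have heq : expandedUncenteredMaximal μ t g ⁻¹' Set.Ioi c
      = {x | c < expandedUncenteredMaximal μ t g x} := rfl
  rw [heq]
  exact hopen.measurableSet

lemma rb_avg_le_maximal (μ : Measure X)
    (hpos : ∀ (y : X) (s : ℝ), 0 < s → 0 < μ (closedBall y s))
    (hfin : ∀ s : Set X, Bornology.IsBounded s → μ s < ∞)
    (t : ℝ) (ht : 1 ≤ t) (g : X → ℝ)
    (x₀ : X) (r₀ t₀ : ℝ) (hr₀ : 0 < r₀) (ht₀ : 1 ≤ t₀) (ht₀' : t₀ ≤ t)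
    (y : X) (hy : y ∈ closedBall x₀ (t₀ * r₀)) :
    (∫⁻ z in closedBall x₀ r₀, ‖g z‖₊ ∂μ) / μ (closedBall x₀ r₀)
      ≤ expandedUncenteredMaximal μ t g y := by
  set a := ∫⁻ z in closedBall x₀ r₀, ‖g z‖₊ ∂μ with ha
  have hseq : Tendsto (fun k : ℕ => μ (closedBall x₀ (r₀ + 1 / (k + 1)))) atTop
      (𝓝 (μ (closedBall x₀ r₀))) := by
    have hinter : ⋂ k : ℕ, closedBall x₀ (r₀ + 1 / (k + 1)) = closedBall x₀ r₀ := by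
      ext z
      simp only [Set.mem_iInter, mem_closedBall]
      constructor
      · intro h
        by_contra hlt
        push_neg at hlt
        obtain ⟨k, hk⟩ := exists_nat_one_div_lt (sub_pos.mpr hlt)
        exact absurd (h k) (by push_neg; linarith)
      · intro h k
        have h1 : (0 : ℝ) < 1 / (k + 1) := by positivity
        linarith
    have hanti : Antitone fun k : ℕ => closedBall x₀ (r₀ + 1 / (k + 1)) := by
      intro k l hkl
      apply closedBall_subset_closedBall
      have hkl' : (k : ℝ) ≤ l := Nat.cast_le.mpr hkl
      have : (1 : ℝ) / (l + 1) ≤ 1 / (k + 1) := by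
        apply one_div_le_one_div_of_le (by positivity)
        linarith
      linarith
    have := MeasureTheory.tendsto_measure_iInter_atTop (μ := μ)
      (s := fun k : ℕ => closedBall x₀ (r₀ + 1 / (k + 1)))
      (fun k => (measurableSet_closedBall).nullMeasurableSet) hanti
      ⟨0, (hfin _ isBounded_closedBall).ne⟩
    rwa [hinter] at this
  have hlim : Tendsto (fun k : ℕ => a / μ (closedBall x₀ (r₀ + 1 / (k + 1)))) atTop
      (𝓝 (a / μ (closedBall x₀ r₀))) :=
    ENNReal.Tendsto.const_div hseq (Or.inl (hfin _ isBounded_closedBall).ne)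
  refine le_of_tendsto hlim (Filter.Eventually.of_forall fun k => ?_)
  set r' : ℝ := r₀ + 1 / (k + 1) with hr'def
  have hr'gt : r₀ < r' := by
    have : (0 : ℝ) < 1 / (k + 1) := by positivity
    simp [hr'def]; linarith
  have hr'pos : 0 < r' := hr₀.trans hr'gt
  have hdist : dist y x₀ < t * r' := by
    have h1 : dist y x₀ ≤ t₀ * r₀ := mem_closedBall.mp hy
    have h2 : t₀ * r₀ ≤ t * r₀ := mul_le_mul_of_nonneg_right ht₀' hr₀.le
    have h3 : t * r₀ < t * r' := by
      apply mul_lt_mul_of_pos_left hr'gt (by linarith)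
    linarith
  have hμpos : 0 < μ (closedBall x₀ r') := hpos x₀ r' hr'pos
  calc a / μ (closedBall x₀ r')
      ≤ (∫⁻ z in closedBall x₀ (t * r'), ‖g z‖₊ ∂μ) / μ (closedBall x₀ r') := by
        apply ENNReal.div_le_div_right
        apply lintegral_mono_set
        apply closedBall_subset_closedBall
        calc r₀ ≤ r' := hr'gt.le
          _ = 1 * r' := (one_mul r').symm
          _ ≤ t * r' := mul_le_mul_of_nonneg_right ht hr'pos.le
    _ ≤ expandedUncenteredMaximal μ t g y := by
        exact le_iSup_of_le x₀ <| le_iSup_of_le r' <| le_iSup_of_le hr'pos <|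
          le_iSup_of_le hdist <| le_iSup_of_le hμpos le_rfl

end AuxRB

/-- **Reverse Boman covering lemma.**  If `μ` is doubling, `t ≥ 1`, and the expanded uncentered
maximal operator `M^{ut}_μ` is bounded on `L^q(μ)` with constant `C`, then for any finite sequence
of closed balls, positive weights, and dilations `1 ≤ t n ≤ t`,
`‖ Σ w n 1_{B(x n, r n)}/μ(B(x n, r n)) ‖_p ≤
 C ‖ Σ w n 1_{B(x n, t n r n)}/μ(B(x n, t n r n)) ‖_p`. -/
theorem reverse_boman_covering
    {X : Type*} [MetricSpace X] [MeasurableSpace X] [BorelSpace X]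
    (μ : Measure X) (hμ : μ ≠ 0)
    (hfin : ∀ s : Set X, Bornology.IsBounded s → μ s < ∞)
    (hdoub : ∃ Cd : ℝ≥0∞, 1 ≤ Cd ∧ ∀ (x : X) (r : ℝ), 0 < r →
      μ (ball x (2 * r)) ≤ Cd * μ (ball x r) ∧ μ (ball x r) < ∞)
    (p q : ℝ) (hp : 1 < p) (hq : q = p / (p - 1))
    (t : ℝ) (ht : 1 ≤ t)
    (C : ℝ≥0∞)
    (hC : ∀ h : X → ℝ, MemLp h (ENNReal.ofReal q) μ →
      lpNorm μ q (expandedUncenteredMaximal μ t h) ≤ C * lpNorm μ q (fun x => (‖h x‖₊ : ℝ≥0∞)))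
    (N : ℕ) (x : Fin N → X) (r w tn : Fin N → ℝ)
    (hr : ∀ n, 0 < r n)
    (hw : ∀ n, 0 < w n)
    (htn : ∀ n, 1 ≤ tn n ∧ tn n ≤ t) :
    lpNorm μ p (fun y => ∑ n : Fin N, (closedBall (x n) (r n)).indicator
        (fun _ => ENNReal.ofReal (w n) / μ (closedBall (x n) (r n))) y)
      ≤ C * lpNorm μ p (fun y => ∑ n : Fin N, (closedBall (x n) (tn n * r n)).indicator
        (fun _ => ENNReal.ofReal (w n) / μ (closedBall (x n) (tn n * r n))) y) := by
  classical
  have hpos := rb_ball_pos μ hμ hdoub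
  have hpq : p.HolderConjugate q := (Real.holderConjugate_iff_eq_conjExponent hp).2 hq
  have hq1 : 1 < q := hpq.symm.lt
  have hppos : 0 < p := hpq.pos
  have hqpos : 0 < q := hpq.symm.pos
  set F : X → ℝ≥0∞ := fun y => ∑ n : Fin N, (closedBall (x n) (r n)).indicator
      (fun _ => ENNReal.ofReal (w n) / μ (closedBall (x n) (r n))) y with hFdef
  set G : X → ℝ≥0∞ := fun y => ∑ n : Fin N, (closedBall (x n) (tn n * r n)).indicator
      (fun _ => ENNReal.ofReal (w n) / μ (closedBall (x n) (tn n * r n))) y with hGdef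
  have hμB : ∀ n, 0 < μ (closedBall (x n) (r n)) := fun n => hpos _ _ (hr n)
  have hμBfin : ∀ n, μ (closedBall (x n) (r n)) ≠ ∞ :=
    fun n => (hfin _ isBounded_closedBall).ne
  have htnpos : ∀ n, (0 : ℝ) < tn n := fun n => lt_of_lt_of_le zero_lt_one (htn n).1
  have htnr : ∀ n, 0 < tn n * r n := fun n => mul_pos (htnpos n) (hr n)
  have hμT : ∀ n, 0 < μ (closedBall (x n) (tn n * r n)) := fun n => hpos _ _ (htnr n)
  have hμTfin : ∀ n, μ (closedBall (x n) (tn n * r n)) ≠ ∞ :=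
    fun n => (hfin _ isBounded_closedBall).ne
  have hcfin : ∀ n, ENNReal.ofReal (w n) / μ (closedBall (x n) (r n)) ≠ ∞ :=
    fun n => (ENNReal.div_lt_top ENNReal.ofReal_ne_top (hμB n).ne').ne
  have hFfin : ∀ z, F z ≠ ∞ := by
    intro z
    refine (ENNReal.sum_lt_top.mpr fun n _ => ?_).ne
    exact lt_of_le_of_lt
      (Set.indicator_apply_le' (fun _ => le_rfl) (fun _ => zero_le)) (hcfin n).lt_top
  have hFmeas : Measurable F :=
    Finset.measurable_sum _ fun n _ => measurable_const.indicator measurableSet_closedBall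
  have hGmeas : Measurable G :=
    Finset.measurable_sum _ fun n _ => measurable_const.indicator measurableSet_closedBall
  set h : X → ℝ := fun z => (F z ^ (p - 1)).toReal with hhdef
  have hhmeas : Measurable h := (hFmeas.pow_const (p - 1)).ennreal_toReal
  have hcoe : ∀ z, (‖h z‖₊ : ℝ≥0∞) = F z ^ (p - 1) := by
    intro z
    show ‖h z‖ₑ = _
    rw [Real.enorm_eq_ofReal ENNReal.toReal_nonneg,
      ENNReal.ofReal_toReal (ENNReal.rpow_ne_top_of_nonneg (by linarith) (hFfin z))]
  set Ψ : X → ℝ≥0∞ := fun z => (‖h z‖₊ : ℝ≥0∞) with hΨdef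
  have hΨmeas : Measurable Ψ := hhmeas.enorm
  set I : ℝ≥0∞ := ∫⁻ z, F z ^ p ∂μ with hIdef
  -- finiteness of I
  set cTot : ℝ≥0∞ := ∑ n : Fin N, ENNReal.ofReal (w n) / μ (closedBall (x n) (r n)) with hcTot
  set S : Set X := ⋃ n : Fin N, closedBall (x n) (r n) with hSdef
  have hSmeas : MeasurableSet S := MeasurableSet.iUnion fun n => measurableSet_closedBall
  have hSfin : μ S < ∞ := by
    refine lt_of_le_of_lt (measure_iUnion_le (μ := μ) _) ?_
    rw [tsum_fintype]
    exact ENNReal.sum_lt_top.mpr fun n _ => hfin _ isBounded_closedBall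
  have hcTotfin : cTot ≠ ∞ := (ENNReal.sum_lt_top.mpr fun n _ => (hcfin n).lt_top).ne
  have hFle : ∀ z, F z ≤ S.indicator (fun _ => cTot) z := by
    intro z
    by_cases hz : z ∈ S
    · rw [Set.indicator_of_mem hz]
      exact Finset.sum_le_sum fun n _ =>
        Set.indicator_apply_le' (fun _ => le_rfl) (fun _ => zero_le)
    · rw [Set.indicator_of_notMem hz]
      have hnot : ∀ n : Fin N, z ∉ closedBall (x n) (r n) :=
        fun n hn => hz (Set.mem_iUnion.2 ⟨n, hn⟩)
      have hz0 : F z = 0 := Finset.sum_eq_zero fun n _ => Set.indicator_of_notMem (hnot n) _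
      rw [hz0]
  have hIfin : I ≠ ∞ := by
    have hle2 : I ≤ ∫⁻ z, S.indicator (fun _ => cTot ^ p) z ∂μ := by
      apply lintegral_mono
      intro z
      calc F z ^ p ≤ (S.indicator (fun _ => cTot) z) ^ p :=
            ENNReal.rpow_le_rpow (hFle z) hppos.le
        _ = S.indicator (fun _ => cTot ^ p) z := by
            by_cases hz : z ∈ S
            · simp [Set.indicator_of_mem hz]
            · simp [Set.indicator_of_notMem hz, ENNReal.zero_rpow_of_pos hppos]
    refine ne_top_of_le_ne_top ?_ hle2
    rw [lintegral_indicator hSmeas, setLIntegral_const]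
    exact (ENNReal.mul_lt_top (ENNReal.rpow_lt_top_of_nonneg hppos.le hcTotfin) hSfin).ne
  by_cases hI0 : I = 0
  · have hlp0 : lpNorm μ p F = 0 := by
      rw [_root_.lpNorm, ← hIdef, hI0, ENNReal.zero_rpow_of_pos (by positivity)]
    rw [hlp0]
    exact zero_le
  -- main computation
  set Mh : X → ℝ≥0∞ := expandedUncenteredMaximal μ t h with hMhdef
  have hMmeas : Measurable Mh := rb_maximal_measurable μ t h
  set a : Fin N → ℝ≥0∞ := fun n => ∫⁻ z in closedBall (x n) (r n), Ψ z ∂μ with hadef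
  have hrpow : ∀ z, F z ^ p = F z * Ψ z := by
    intro z
    rw [hΨdef]
    simp only []
    rw [hcoe z]
    calc F z ^ p = F z ^ (1 + (p - 1)) := by rw [show (1 : ℝ) + (p - 1) = p by ring]
      _ = F z ^ (1 : ℝ) * F z ^ (p - 1) :=
          ENNReal.rpow_add_of_nonneg 1 (p - 1) zero_le_one (by linarith)
      _ = F z * F z ^ (p - 1) := by rw [ENNReal.rpow_one]
  have hterm : ∀ (c : ℝ≥0∞) (s : Set X) (Φ : X → ℝ≥0∞), MeasurableSet s → Measurable Φ →
      (∫⁻ z, s.indicator (fun _ => c) z * Φ z ∂μ) = c * ∫⁻ z in s, Φ z ∂μ := by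
    intro c s Φ hs hΦ
    have hpt : ∀ z, s.indicator (fun _ => c) z * Φ z = s.indicator (fun y => c * Φ y) z := by
      intro z
      by_cases hz : z ∈ s <;> simp [hz]
    rw [lintegral_congr hpt, lintegral_indicator hs, lintegral_const_mul c hΦ]
  have hsum_expand : ∀ (ρ : Fin N → ℝ) (Φ : X → ℝ≥0∞), Measurable Φ →
      (∫⁻ z, (∑ n : Fin N, (closedBall (x n) (ρ n)).indicator
          (fun _ => ENNReal.ofReal (w n) / μ (closedBall (x n) (ρ n))) z) * Φ z ∂μ)
        = ∑ n : Fin N, (ENNReal.ofReal (w n) / μ (closedBall (x n) (ρ n)))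
            * ∫⁻ z in closedBall (x n) (ρ n), Φ z ∂μ := by
    intro ρ Φ hΦ
    have h1 : ∀ z, (∑ n : Fin N, (closedBall (x n) (ρ n)).indicator
        (fun _ => ENNReal.ofReal (w n) / μ (closedBall (x n) (ρ n))) z) * Φ z
        = ∑ n : Fin N, (closedBall (x n) (ρ n)).indicator
            (fun _ => ENNReal.ofReal (w n) / μ (closedBall (x n) (ρ n))) z * Φ z :=
      fun z => Finset.sum_mul _ _ _
    rw [lintegral_congr h1, lintegral_finset_sum (f := fun n z => (closedBall (x n) (ρ n)).indicator
          (fun _ => ENNReal.ofReal (w n) / μ (closedBall (x n) (ρ n))) z * Φ z) _ fun n _ =>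
      (measurable_const.indicator measurableSet_closedBall).mul hΦ]
    exact Finset.sum_congr rfl fun n _ => hterm _ _ _ measurableSet_closedBall hΦ
  have hstep1 : I = ∑ n : Fin N,
      (ENNReal.ofReal (w n) / μ (closedBall (x n) (r n))) * a n := by
    rw [hIdef, lintegral_congr hrpow, hFdef]
    exact hsum_expand r Ψ hΨmeas
  have hkey : ∀ n : Fin N, ∀ y ∈ closedBall (x n) (tn n * r n),
      a n / μ (closedBall (x n) (r n)) ≤ Mh y := fun n y hy =>
    rb_avg_le_maximal μ hpos hfin t ht h (x n) (r n) (tn n) (hr n) (htn n).1 (htn n).2 y hy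
  have hstep2 : (∑ n : Fin N,
      (ENNReal.ofReal (w n) / μ (closedBall (x n) (r n))) * a n) ≤ ∫⁻ z, G z * Mh z ∂μ := by
    have hGM : ∫⁻ z, G z * Mh z ∂μ = ∑ n : Fin N,
        (ENNReal.ofReal (w n) / μ (closedBall (x n) (tn n * r n)))
          * ∫⁻ z in closedBall (x n) (tn n * r n), Mh z ∂μ := by
      rw [hGdef]
      exact hsum_expand (fun n => tn n * r n) Mh hMmeas
    rw [hGM]
    apply Finset.sum_le_sum
    intro n _
    have h1 : (a n / μ (closedBall (x n) (r n))) * μ (closedBall (x n) (tn n * r n))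
        ≤ ∫⁻ z in closedBall (x n) (tn n * r n), Mh z ∂μ := by
      rw [← setLIntegral_const]
      exact setLIntegral_mono hMmeas fun y hy => hkey n y hy
    have heq : (ENNReal.ofReal (w n) / μ (closedBall (x n) (r n))) * a n
        = (ENNReal.ofReal (w n) / μ (closedBall (x n) (tn n * r n)))
            * ((a n / μ (closedBall (x n) (r n))) * μ (closedBall (x n) (tn n * r n))) := by
      rw [div_eq_mul_inv, div_eq_mul_inv, div_eq_mul_inv]
      have hT : μ (closedBall (x n) (tn n * r n)) * (μ (closedBall (x n) (tn n * r n)))⁻¹ = 1 :=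
        ENNReal.mul_inv_cancel (hμT n).ne' (hμTfin n)
      calc ENNReal.ofReal (w n) * (μ (closedBall (x n) (r n)))⁻¹ * a n
          = ENNReal.ofReal (w n) * (μ (closedBall (x n) (r n)))⁻¹ * a n
              * (μ (closedBall (x n) (tn n * r n)) * (μ (closedBall (x n) (tn n * r n)))⁻¹) := by
            rw [hT, mul_one]
        _ = ENNReal.ofReal (w n) * (μ (closedBall (x n) (tn n * r n)))⁻¹
              * (a n * (μ (closedBall (x n) (r n)))⁻¹ * μ (closedBall (x n) (tn n * r n))) := by
            ring
    rw [heq]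
    exact mul_le_mul_right h1 _
  have hstep3 : ∫⁻ z, G z * Mh z ∂μ ≤ lpNorm μ p G * lpNorm μ q Mh := by
    have := ENNReal.lintegral_mul_le_Lp_mul_Lq μ hpq hGmeas.aemeasurable hMmeas.aemeasurable
    simpa [_root_.lpNorm, Pi.mul_apply] using this
  have hIq : ∫⁻ z, Ψ z ^ q ∂μ = I := by
    rw [hIdef]
    apply lintegral_congr
    intro z
    rw [hΨdef]
    simp only []
    rw [hcoe z, ← ENNReal.rpow_mul, hpq.sub_one_mul_conj]
  have hMem : MemLp h (ENNReal.ofReal q) μ := by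
    constructor
    · exact hhmeas.stronglyMeasurable.aestronglyMeasurable
    · rw [eLpNorm_eq_lintegral_rpow_enorm_toReal (ENNReal.ofReal_pos.mpr hqpos).ne'
        ENNReal.ofReal_ne_top, ENNReal.toReal_ofReal hqpos.le]
      have : (∫⁻ z, ‖h z‖ₑ ^ q ∂μ) = I := hIq
      rw [this]
      exact ENNReal.rpow_lt_top_of_nonneg (by positivity) hIfin
  have hhq : lpNorm μ q Ψ = I ^ (1 / q) := by
    rw [_root_.lpNorm, hIq]
  have hCapp : lpNorm μ q Mh ≤ C * I ^ (1 / q) := by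
    have := hC h hMem
    rw [← hhq]
    exact this
  have hIle : I ≤ lpNorm μ p G * (C * I ^ (1 / q)) := by
    calc I = ∑ n : Fin N, (ENNReal.ofReal (w n) / μ (closedBall (x n) (r n))) * a n := hstep1
      _ ≤ ∫⁻ z, G z * Mh z ∂μ := hstep2
      _ ≤ lpNorm μ p G * lpNorm μ q Mh := hstep3
      _ ≤ lpNorm μ p G * (C * I ^ (1 / q)) := mul_le_mul_right hCapp _
  have hq0 : I ^ (1 / q) ≠ 0 :=
    (ENNReal.rpow_pos (pos_iff_ne_zero.mpr hI0) hIfin).ne'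
  have hqtop : I ^ (1 / q) ≠ ∞ := ENNReal.rpow_ne_top_of_nonneg (by positivity) hIfin
  show lpNorm μ p F ≤ C * lpNorm μ p G
  rw [_root_.lpNorm, ← hIdef]
  have h1p : (1 : ℝ) / p = 1 - 1 / q := by
    have := hpq.inv_add_inv_eq_one
    rw [one_div, one_div]
    linarith
  rw [h1p, ENNReal.rpow_sub 1 (1 / q) hI0 hIfin, ENNReal.rpow_one]
  rw [ENNReal.div_le_iff_le_mul (Or.inl hq0) (Or.inl hqtop)]
  calc I ≤ lpNorm μ p G * (C * I ^ (1 / q)) := hIle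
    _ = C * lpNorm μ p G * I ^ (1 / q) := by ring

end
end

section
/- Let (X,d,μ) be a metric measure space, let 1 < p < ∞ and q = p/(p-1), and suppose C ≥ 0 is a constant such that ‖M_μ h‖_{L^q(μ)} ≤ C‖h‖_{L^q(μ)} for every h ∈ L^q(μ). Let B^cl(x_n, r_n), 1 ≤ n ≤ N, be a finite sequence of closed balls with centers x_n in the support of μ. Then there exists a sequence T_n ∈ (0,1), 1 ≤ n ≤ N (depending on the balls), such that whenever 0 < t_n ≤ T_n for each n, for every sequence of weights w_n > 0 one has ‖ Σ_{n=1}^N w_n · 1_{B^cl(x_n, r_n)} / μ(B^cl(x_n, r_n)) ‖_{L^p(μ)} ≤ 2C · ‖ Σ_{n=1}^N w_n · 1_{B^cl(x_n, t_n r_n)} / μ(B^cl(x_n, t_n r_n)) ‖_{L^p(μ)}. -/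
open MeasureTheory Metric ENNReal Set

noncomputable section

/-- The centered Hardy–Littlewood maximal operator. -/
def centeredMaximal {X : Type*} [MetricSpace X] [MeasurableSpace X]
    (μ : Measure X) (g : X → ℝ) (x : X) : ℝ≥0∞ :=
  ⨆ (r : ℝ) (_ : 0 < r) (_ : 0 < μ (closedBall x r)),
    (∫⁻ z in closedBall x r, ‖g z‖₊ ∂μ) / μ (closedBall x r)

/-- **Centered Boman covering lemma.**  If the centered maximal operator is bounded on `L^q(μ)`
with constant `C`, then for any finite sequence of closed balls with centers in the support
of `μ` there are contraction factors `T n ∈ (0,1)` such that for all `0 < t n ≤ T n` and all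
positive weights `w n`,
`‖ Σ w n 1_{B(x n, r n)}/μ(B(x n, r n)) ‖_p ≤
 2C ‖ Σ w n 1_{B(x n, t n r n)}/μ(B(x n, t n r n)) ‖_p`. -/
theorem centered_boman_covering
    {X : Type*} [MetricSpace X] [MeasurableSpace X] [BorelSpace X]
    (μ : Measure X) (hμ : μ ≠ 0)
    (hfin : ∀ s : Set X, Bornology.IsBounded s → μ s < ∞)
    (p q : ℝ) (hp : 1 < p) (hq : q = p / (p - 1))
    (C : ℝ≥0∞)
    (hC : ∀ h : X → ℝ, MemLp h (ENNReal.ofReal q) μ →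
      lpNorm μ q (centeredMaximal μ h) ≤ C * lpNorm μ q (fun x => (‖h x‖₊ : ℝ≥0∞)))
    (N : ℕ) (x : Fin N → X) (r : Fin N → ℝ)
    (hr : ∀ n, 0 < r n)
    (hsupp : ∀ n, ∀ ε : ℝ, 0 < ε → 0 < μ (ball (x n) ε)) :
    ∃ T : Fin N → ℝ, (∀ n, T n ∈ Set.Ioo (0 : ℝ) 1) ∧
      ∀ t : Fin N → ℝ, (∀ n, 0 < t n ∧ t n ≤ T n) →
      ∀ w : Fin N → ℝ, (∀ n, 0 < w n) →
        lpNorm μ p (fun y => ∑ n : Fin N, (closedBall (x n) (r n)).indicator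
            (fun _ => ENNReal.ofReal (w n) / μ (closedBall (x n) (r n))) y)
          ≤ 2 * C * lpNorm μ p (fun y => ∑ n : Fin N, (closedBall (x n) (t n * r n)).indicator
            (fun _ => ENNReal.ofReal (w n) / μ (closedBall (x n) (t n * r n))) y) := by
  have hpq : p.HolderConjugate q := (Real.holderConjugate_iff_eq_conjExponent hp).2 hq
  have hq1 : 1 < q := hpq.symm.lt
  have hq0 : 0 < q := lt_trans zero_lt_one hq1
  have hp0 : 0 < p := lt_trans zero_lt_one hp
  have ha_pos : ∀ n, 0 < μ (closedBall (x n) (r n)) := fun n =>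
    lt_of_lt_of_le (hsupp n (r n) (hr n)) (measure_mono ball_subset_closedBall)
  have ha_fin : ∀ n, μ (closedBall (x n) (r n)) < ∞ := fun n =>
    hfin _ isBounded_closedBall
  -- choice of the contraction factors
  have hTex : ∀ n, ∃ T : ℝ, T ∈ Set.Ioo (0 : ℝ) 1 ∧
      μ (closedBall (x n) ((1 + 2 * T) * r n)) ≤ 2 * μ (closedBall (x n) (r n)) := by
    intro n
    have hinter : ⋂ k : ℕ, closedBall (x n) (r n + 1 / ((k : ℝ) + 1)) =
        closedBall (x n) (r n) := by
      apply Set.Subset.antisymm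
      · intro z hz
        simp only [Set.mem_iInter, mem_closedBall] at hz ⊢
        refine le_of_forall_pos_le_add fun ε hε => ?_
        obtain ⟨k, hk⟩ := exists_nat_one_div_lt hε
        exact (hz k).trans (by linarith)
      · intro z hz
        simp only [Set.mem_iInter, mem_closedBall] at hz ⊢
        intro k
        have : (0 : ℝ) < 1 / ((k : ℝ) + 1) := by positivity
        linarith
    have hanti : Antitone fun k : ℕ => closedBall (x n) (r n + 1 / ((k : ℝ) + 1)) := by
      intro i j hij
      apply closedBall_subset_closedBall
      have h1 : (i : ℝ) + 1 ≤ (j : ℝ) + 1 := by exact_mod_cast Nat.succ_le_succ hij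
      have h2 : 1 / ((j : ℝ) + 1) ≤ 1 / ((i : ℝ) + 1) :=
        one_div_le_one_div_of_le (by positivity) h1
      linarith
    have htend : Filter.Tendsto (fun k : ℕ => μ (closedBall (x n) (r n + 1 / ((k : ℝ) + 1))))
        Filter.atTop (nhds (μ (closedBall (x n) (r n)))) := by
      have := tendsto_measure_iInter_atTop (μ := μ)
        (s := fun k : ℕ => closedBall (x n) (r n + 1 / ((k : ℝ) + 1)))
        (fun k => measurableSet_closedBall.nullMeasurableSet) hanti
        ⟨0, (hfin _ isBounded_closedBall).ne⟩
      rwa [hinter] at this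
    have hlt : μ (closedBall (x n) (r n)) < 2 * μ (closedBall (x n) (r n)) := by
      conv_lhs => rw [← one_mul (μ (closedBall (x n) (r n)))]
      exact ENNReal.mul_lt_mul_left (ha_pos n).ne' (ha_fin n).ne one_lt_two
    obtain ⟨k, hk⟩ := (htend.eventually_le_const hlt).exists
    set δ : ℝ := 1 / ((k : ℝ) + 1) with hδdef
    have hδpos : 0 < δ := by positivity
    refine ⟨min (1 / 2) (δ / (2 * r n)), ⟨?_, ?_⟩, ?_⟩
    · have := hr n
      positivity
    · exact lt_of_le_of_lt (min_le_left _ _) (by norm_num)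
    · refine le_trans (measure_mono (closedBall_subset_closedBall ?_)) hk
      have h1 : min (1 / 2) (δ / (2 * r n)) ≤ δ / (2 * r n) := min_le_right _ _
      have h2 : 0 < 2 * r n := by linarith [hr n]
      have h3 := (le_div_iff₀ h2).1 h1
      nlinarith [hr n]
  choose T hT1 hT2 using hTex
  refine ⟨T, hT1, ?_⟩
  intro t ht w hw
  -- notation
  set F : X → ℝ≥0∞ := fun y => ∑ n : Fin N, (closedBall (x n) (r n)).indicator
      (fun _ => ENNReal.ofReal (w n) / μ (closedBall (x n) (r n))) y with hFdef
  set G : X → ℝ≥0∞ := fun y => ∑ n : Fin N, (closedBall (x n) (t n * r n)).indicator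
      (fun _ => ENNReal.ofReal (w n) / μ (closedBall (x n) (t n * r n))) y with hGdef
  have hb_pos : ∀ n, 0 < μ (closedBall (x n) (t n * r n)) := fun n =>
    lt_of_lt_of_le (hsupp n _ (mul_pos (ht n).1 (hr n))) (measure_mono ball_subset_closedBall)
  have hb_fin : ∀ n, μ (closedBall (x n) (t n * r n)) < ∞ := fun n =>
    hfin _ isBounded_closedBall
  have hF_meas : Measurable F :=
    Finset.measurable_sum _ fun n _ => measurable_const.indicator measurableSet_closedBall
  have hG_meas : Measurable G :=
    Finset.measurable_sum _ fun n _ => measurable_const.indicator measurableSet_closedBall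
  set c0 : ℝ≥0∞ := ∑ n : Fin N, ENNReal.ofReal (w n) / μ (closedBall (x n) (r n)) with hc0def
  have hc0_fin : c0 < ∞ := by
    rw [hc0def]
    refine ENNReal.sum_lt_top.2 fun n _ => ?_
    exact ENNReal.div_lt_top ENNReal.ofReal_ne_top (ha_pos n).ne'
  have hF_le : ∀ y, F y ≤ c0 := by
    intro y
    refine Finset.sum_le_sum fun n _ => ?_
    exact Set.indicator_le_self _ _ y
  have hF_fin : ∀ y, F y < ∞ := fun y => lt_of_le_of_lt (hF_le y) hc0_fin
  set U : Set X := ⋃ n : Fin N, closedBall (x n) (r n) with hUdef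
  have hU_meas : MeasurableSet U := MeasurableSet.iUnion fun n => measurableSet_closedBall
  have hU_fin : μ U < ∞ := by
    refine lt_of_le_of_lt (measure_iUnion_le _) ?_
    rw [tsum_fintype]
    exact ENNReal.sum_lt_top.2 fun n _ => ha_fin n
  have hF_zero : ∀ y, y ∉ U → F y = 0 := by
    intro y hy
    rw [hFdef]
    refine Finset.sum_eq_zero fun n _ => ?_
    rw [Set.indicator_of_notMem (fun h => hy (Set.mem_iUnion.2 ⟨n, h⟩))]
  set A : ℝ≥0∞ := ∫⁻ y, F y ^ p ∂μ with hAdef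
  have hA_fin : A < ∞ := by
    have hb : ∀ y, F y ^ p ≤ U.indicator (fun _ => c0 ^ p) y := by
      intro y
      by_cases hy : y ∈ U
      · rw [Set.indicator_of_mem hy]
        exact ENNReal.rpow_le_rpow (hF_le y) hp0.le
      · rw [Set.indicator_of_notMem hy, hF_zero y hy, ENNReal.zero_rpow_of_pos hp0]
    refine lt_of_le_of_lt (lintegral_mono hb) ?_
    rw [lintegral_indicator hU_meas, setLIntegral_const]
    exact ENNReal.mul_lt_top (ENNReal.rpow_lt_top_of_nonneg hp0.le hc0_fin.ne) hU_fin
  show lpNorm μ p F ≤ 2 * C * lpNorm μ p G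
  rcases eq_or_ne A 0 with hA0 | hA0
  · have : lpNorm μ p F = 0 := by
      rw [_root_.lpNorm, ← hAdef, hA0, ENNReal.zero_rpow_of_pos (by positivity)]
    rw [this]
    exact zero_le
  -- the dual function g
  set g : X → ℝ := fun y => (F y ^ (p - 1)).toReal with hgdef
  have hFp1_meas : Measurable fun y => F y ^ (p - 1) :=
    ENNReal.continuous_rpow_const.measurable.comp hF_meas
  have hg_meas : Measurable g := hFp1_meas.ennreal_toReal
  have hFp1_fin : ∀ y, F y ^ (p - 1) ≠ ∞ := fun y =>
    ENNReal.rpow_ne_top_of_nonneg (by linarith) (hF_fin y).ne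
  have hgF : ∀ y, (‖g y‖₊ : ℝ≥0∞) = F y ^ (p - 1) := by
    intro y
    rw [hgdef]
    simp only []
    rw [← enorm_eq_nnnorm, Real.enorm_eq_ofReal ENNReal.toReal_nonneg, ENNReal.ofReal_toReal (hFp1_fin y)]
  have hg_mem : MemLp g (ENNReal.ofReal q) μ := by
    refine ⟨hg_meas.aestronglyMeasurable, ?_⟩
    have hbound : ∀ y, ‖g y‖ ≤ ‖U.indicator (fun _ => (c0 ^ (p - 1)).toReal) y‖ := by
      intro y
      by_cases hy : y ∈ U
      · rw [Set.indicator_of_mem hy, Real.norm_of_nonneg ENNReal.toReal_nonneg,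
          Real.norm_of_nonneg ENNReal.toReal_nonneg]
        exact ENNReal.toReal_mono (ENNReal.rpow_ne_top_of_nonneg (by linarith) hc0_fin.ne)
          (ENNReal.rpow_le_rpow (hF_le y) (by linarith))
      · have : g y = 0 := by
          rw [hgdef]
          simp only []
          rw [hF_zero y hy, ENNReal.zero_rpow_of_pos (by linarith), ENNReal.toReal_zero]
        rw [this]
        simp [norm_nonneg]
    refine lt_of_le_of_lt (eLpNorm_mono hbound) ?_
    rw [eLpNorm_indicator_const hU_meas (by simp [hq0, hq0.not_ge]) ENNReal.ofReal_ne_top]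
    exact ENNReal.mul_lt_top ENNReal.coe_lt_top
      (ENNReal.rpow_lt_top_of_nonneg (by positivity) hU_fin.ne)
  -- the L^q norm of g
  have hgq : lpNorm μ q (fun y => (‖g y‖₊ : ℝ≥0∞)) = A ^ (1 / q) := by
    rw [_root_.lpNorm, hAdef]
    congr 1
    refine lintegral_congr fun y => ?_
    rw [hgF y, ← ENNReal.rpow_mul, hpq.sub_one_mul_conj]
  -- set integrals of F^{p-1} over the big balls
  set I : Fin N → ℝ≥0∞ := fun n => ∫⁻ z in closedBall (x n) (r n), F z ^ (p - 1) ∂μ with hIdef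
  set cc : Fin N → ℝ≥0∞ := fun n => I n / (2 * μ (closedBall (x n) (r n))) with hccdef
  -- key pointwise inequality
  have hkey : ∀ n, ∀ y ∈ closedBall (x n) (t n * r n), cc n ≤ centeredMaximal μ g y := by
    intro n y hy
    have htn := ht n
    set ρ := (1 + t n) * r n with hρdef
    have hρ : 0 < ρ := by nlinarith [htn.1, hr n]
    have hyx : dist y (x n) ≤ t n * r n := mem_closedBall.1 hy
    have hsub1 : closedBall (x n) (r n) ⊆ closedBall y ρ := by
      intro z hz
      rw [mem_closedBall] at hz ⊢
      calc dist z y ≤ dist z (x n) + dist (x n) y := dist_triangle _ _ _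
        _ ≤ r n + t n * r n := add_le_add hz (by rwa [dist_comm])
        _ = ρ := by rw [hρdef]; ring
    have hsub2 : closedBall y ρ ⊆ closedBall (x n) ((1 + 2 * T n) * r n) := by
      intro z hz
      rw [mem_closedBall] at hz ⊢
      calc dist z (x n) ≤ dist z y + dist y (x n) := dist_triangle _ _ _
        _ ≤ ρ + t n * r n := add_le_add hz hyx
        _ ≤ (1 + 2 * T n) * r n := by
            rw [hρdef]
            nlinarith [hr n, htn.1, htn.2]
    have hpos : 0 < μ (closedBall y ρ) := lt_of_lt_of_le (ha_pos n) (measure_mono hsub1)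
    have hle2 : μ (closedBall y ρ) ≤ 2 * μ (closedBall (x n) (r n)) :=
      le_trans (measure_mono hsub2) (hT2 n)
    have hIle : I n ≤ ∫⁻ z in closedBall y ρ, (‖g z‖₊ : ℝ≥0∞) ∂μ := by
      have heq : I n = ∫⁻ z in closedBall (x n) (r n), (‖g z‖₊ : ℝ≥0∞) ∂μ := by
        rw [hIdef]
        exact lintegral_congr fun z => (hgF z).symm
      rw [heq]
      exact lintegral_mono_set hsub1
    have hterm : cc n ≤ (∫⁻ z in closedBall y ρ, (‖g z‖₊ : ℝ≥0∞) ∂μ) / μ (closedBall y ρ) :=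
      ENNReal.div_le_div hIle hle2
    refine hterm.trans ?_
    show _ ≤ ⨆ (r' : ℝ) (_ : 0 < r') (_ : 0 < μ (closedBall y r')),
      (∫⁻ z in closedBall y r', ‖g z‖₊ ∂μ) / μ (closedBall y r')
    exact le_iSup_of_le ρ (le_iSup_of_le hρ (le_iSup_of_le hpos le_rfl))
  -- the measurable minorant
  set H : X → ℝ≥0∞ := fun y => ⨆ n : Fin N,
      (closedBall (x n) (t n * r n)).indicator (fun _ => cc n) y with hHdef
  have hH_meas : Measurable H :=
    Measurable.iSup fun n => measurable_const.indicator measurableSet_closedBall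
  have hH_le : ∀ y, H y ≤ centeredMaximal μ g y := by
    intro y
    refine iSup_le fun n => ?_
    by_cases hy : y ∈ closedBall (x n) (t n * r n)
    · rw [Set.indicator_of_mem hy]
      exact hkey n y hy
    · rw [Set.indicator_of_notMem hy]
      exact zero_le
  -- a general expansion lemma
  have hexpand : ∀ (S : Fin N → Set X) (k : Fin N → ℝ≥0∞) (h : X → ℝ≥0∞),
      (∀ n, MeasurableSet (S n)) → Measurable h →
      ∫⁻ y, (∑ n : Fin N, (S n).indicator (fun _ => k n) y) * h y ∂μ
        = ∑ n : Fin N, k n * ∫⁻ y in S n, h y ∂μ := by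
    intro S k h hS hh
    have hpt : ∀ y, (∑ n : Fin N, (S n).indicator (fun _ => k n) y) * h y
        = ∑ n : Fin N, (S n).indicator (fun z => k n * h z) y := by
      intro y
      rw [Finset.sum_mul]
      refine Finset.sum_congr rfl fun n _ => ?_
      by_cases hy : y ∈ S n <;> simp [hy]
    simp_rw [hpt]
    rw [lintegral_finset_sum _ fun n _ => ((hh.const_mul _).indicator (hS n))]
    refine Finset.sum_congr rfl fun n _ => ?_
    rw [lintegral_indicator (hS n), lintegral_const_mul _ hh]
  -- Step A : expansion of A
  have hFpow : ∀ y, F y ^ p = F y * F y ^ (p - 1) := by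
    intro y
    have h1 : p = 1 + (p - 1) := by ring
    nth_rewrite 1 [h1]
    rw [ENNReal.rpow_add_of_nonneg _ _ zero_le_one (by linarith), ENNReal.rpow_one]
  have hA_eq : A = ∑ n : Fin N,
      (ENNReal.ofReal (w n) / μ (closedBall (x n) (r n))) * I n := by
    rw [hAdef]
    have : ∫⁻ y, F y ^ p ∂μ = ∫⁻ y, F y * F y ^ (p - 1) ∂μ :=
      lintegral_congr fun y => hFpow y
    rw [this]
    exact hexpand _ _ _ (fun n => measurableSet_closedBall) hFp1_meas
  -- Step B : term-by-term comparison
  have hkey2 : ∀ n, (ENNReal.ofReal (w n) / μ (closedBall (x n) (r n))) * I n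
      ≤ 2 * ((ENNReal.ofReal (w n) / μ (closedBall (x n) (t n * r n)))
          * ∫⁻ y in closedBall (x n) (t n * r n), H y ∂μ) := by
    intro n
    have h1 : cc n * μ (closedBall (x n) (t n * r n))
        ≤ ∫⁻ y in closedBall (x n) (t n * r n), H y ∂μ := by
      rw [← setLIntegral_const]
      refine setLIntegral_mono' measurableSet_closedBall fun y hy => ?_
      refine le_trans (le_of_eq ?_) (le_iSup _ n)
      rw [Set.indicator_of_mem hy]
    have ha2 : 2 * cc n = I n / μ (closedBall (x n) (r n)) := by
      rw [hccdef]
      simp only []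
      rw [← mul_div_assoc]
      exact ENNReal.mul_div_mul_left _ _ two_ne_zero ENNReal.ofNat_ne_top
    have hbinv : (μ (closedBall (x n) (t n * r n)))⁻¹ * μ (closedBall (x n) (t n * r n)) = 1 :=
      ENNReal.inv_mul_cancel (hb_pos n).ne' (hb_fin n).ne
    have h2 : (ENNReal.ofReal (w n) / μ (closedBall (x n) (r n))) * I n
        = 2 * ((ENNReal.ofReal (w n) / μ (closedBall (x n) (t n * r n)))
            * (cc n * μ (closedBall (x n) (t n * r n)))) := by
      calc (ENNReal.ofReal (w n) / μ (closedBall (x n) (r n))) * I n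
          = ENNReal.ofReal (w n) * (I n / μ (closedBall (x n) (r n))) := by
            rw [div_eq_mul_inv, div_eq_mul_inv]; ring
        _ = ENNReal.ofReal (w n) * (2 * cc n) := by rw [ha2]
        _ = (2 * (ENNReal.ofReal (w n) * cc n)) *
              ((μ (closedBall (x n) (t n * r n)))⁻¹ * μ (closedBall (x n) (t n * r n))) := by
            rw [hbinv, mul_one]; ring
        _ = 2 * ((ENNReal.ofReal (w n) / μ (closedBall (x n) (t n * r n)))
            * (cc n * μ (closedBall (x n) (t n * r n)))) := by
            rw [div_eq_mul_inv]; ring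
    rw [h2]
    gcongr
  -- Step C : summation and Hölder
  have holder : ∫⁻ y, G y * H y ∂μ
      ≤ (∫⁻ y, G y ^ p ∂μ) ^ (1 / p) * (∫⁻ y, H y ^ q ∂μ) ^ (1 / q) := by
    have := ENNReal.lintegral_mul_le_Lp_mul_Lq μ hpq hG_meas.aemeasurable hH_meas.aemeasurable
    simpa [Pi.mul_apply] using this
  have hGH : ∫⁻ y, G y * H y ∂μ = ∑ n : Fin N,
      (ENNReal.ofReal (w n) / μ (closedBall (x n) (t n * r n)))
        * ∫⁻ y in closedBall (x n) (t n * r n), H y ∂μ := by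
    rw [hGdef]
    exact hexpand _ _ _ (fun n => measurableSet_closedBall) hH_meas
  have hMq : (∫⁻ y, H y ^ q ∂μ) ^ (1 / q) ≤ C * A ^ (1 / q) := by
    have h1 : (∫⁻ y, H y ^ q ∂μ) ^ (1 / q) ≤ lpNorm μ q (centeredMaximal μ g) := by
      rw [_root_.lpNorm]
      exact ENNReal.rpow_le_rpow
        (lintegral_mono fun y => ENNReal.rpow_le_rpow (hH_le y) hq0.le) (by positivity)
    refine h1.trans ?_
    have h2 := hC g hg_mem
    rwa [hgq] at h2
  set D : ℝ≥0∞ := (∫⁻ y, G y ^ p ∂μ) ^ (1 / p) with hDdef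
  have hmain : A ≤ (2 * C * D) * A ^ (1 / q) := by
    calc A = ∑ n : Fin N, (ENNReal.ofReal (w n) / μ (closedBall (x n) (r n))) * I n := hA_eq
      _ ≤ ∑ n : Fin N, 2 * ((ENNReal.ofReal (w n) / μ (closedBall (x n) (t n * r n)))
          * ∫⁻ y in closedBall (x n) (t n * r n), H y ∂μ) :=
        Finset.sum_le_sum fun n _ => hkey2 n
      _ = 2 * ∑ n : Fin N, (ENNReal.ofReal (w n) / μ (closedBall (x n) (t n * r n)))
          * ∫⁻ y in closedBall (x n) (t n * r n), H y ∂μ := by rw [Finset.mul_sum]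
      _ = 2 * ∫⁻ y, G y * H y ∂μ := by rw [hGH]
      _ ≤ 2 * (D * (∫⁻ y, H y ^ q ∂μ) ^ (1 / q)) := mul_le_mul_right holder 2
      _ ≤ 2 * (D * (C * A ^ (1 / q))) := by gcongr
      _ = (2 * C * D) * A ^ (1 / q) := by ring
  -- cancellation
  have hsplit : A = A ^ (1 / p) * A ^ (1 / q) := by
    rw [← ENNReal.rpow_add _ _ hA0 hA_fin.ne]
    rw [show 1 / p + 1 / q = 1 by rw [one_div, one_div]; exact hpq.inv_add_inv_eq_one]
    rw [ENNReal.rpow_one]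
  have hAq_ne : A ^ (1 / q) ≠ 0 := by
    simp [ENNReal.rpow_eq_zero_iff, hA0, hA_fin.ne]
  have hAq_fin : A ^ (1 / q) ≠ ∞ := ENNReal.rpow_ne_top_of_nonneg (by positivity) hA_fin.ne
  have h' : A ^ (1 / p) * A ^ (1 / q) ≤ (2 * C * D) * A ^ (1 / q) :=
    le_trans (le_of_eq hsplit.symm) hmain
  have hfinal : A ^ (1 / p) ≤ 2 * C * D :=
    (ENNReal.mul_le_mul_iff_left hAq_ne hAq_fin).1 h'
  rw [_root_.lpNorm, _root_.lpNorm, ← hAdef, ← hDdef]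
  exact hfinal

end
end

section
/- Let (X,d,μ) be a metric measure space with X second countable, let 1 < p < ∞ and q = p/(p-1). Assume (X,d,μ) has the generalized weak q-Boman covering property with constant C. Then the centered maximal operator M_μ is of weak type (p,p) with constant C: for every f ∈ L^p(μ) and every a > 0, μ({M_μ f > a}) ≤ (C‖f‖_{L^p(μ)}/a)^p. -/
open MeasureTheory Metric ENNReal Set

noncomputable section

/-- The generalized weak `q`-Boman covering property with constant `C`: for every `r > 0`
there is `T r ∈ (0,1)` such that for all finite sequences of closed balls with centers in the
support of `μ`, weights `w n > 0`, contractions `0 < t n ≤ T (r n)`, and sets `E n` of positive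
measure with `E n ⊆ B^cl(x n, t n · r n)`, one has
`‖ Σ w n 1_{B(x n, r n)}/μ(B(x n, r n)) ‖_q ≤ C ‖ Σ w n 1_{E n}/μ(E n) ‖_q`. -/
def GeneralizedWeakBomanProperty {X : Type*} [MetricSpace X] [MeasurableSpace X]
    (μ : Measure X) (q : ℝ) (C : ℝ) : Prop :=
  ∃ T : ℝ → ℝ, (∀ r : ℝ, 0 < r → T r ∈ Set.Ioo (0 : ℝ) 1) ∧
    ∀ (N : ℕ) (x : Fin N → X) (r w t : Fin N → ℝ) (E : Fin N → Set X),
      (∀ n, 0 < r n) →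
      (∀ n, ∀ ε : ℝ, 0 < ε → 0 < μ (ball (x n) ε)) →
      (∀ n, 0 < w n) →
      (∀ n, 0 < t n ∧ t n ≤ T (r n)) →
      (∀ n, MeasurableSet (E n)) →
      (∀ n, 0 < μ (E n)) →
      (∀ n, E n ⊆ closedBall (x n) (t n * r n)) →
      lpNorm μ q (fun y => ∑ n : Fin N, (closedBall (x n) (r n)).indicator
          (fun _ => ENNReal.ofReal (w n) / μ (closedBall (x n) (r n))) y)
        ≤ ENNReal.ofReal C * lpNorm μ q (fun y => ∑ n : Fin N, (E n).indicator
          (fun _ => ENNReal.ofReal (w n) / μ (E n)) y)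

/-- If a (second countable) metric measure space has the generalized weak `q`-Boman covering
property with constant `C`, where `q = p/(p-1)`, then the centered maximal operator is of weak
type `(p,p)` with constant `C`. -/
theorem weak_type_of_generalizedWeakBoman
    {X : Type*} [MetricSpace X] [MeasurableSpace X] [BorelSpace X]
    [SecondCountableTopology X]
    (μ : Measure X) (hμ : μ ≠ 0)
    (hfin : ∀ s : Set X, Bornology.IsBounded s → μ s < ∞)
    (p q : ℝ) (hp : 1 < p) (hq : q = p / (p - 1))
    (C : ℝ) (hC : 0 < C)
    (hB : GeneralizedWeakBomanProperty μ q C)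
    (f : X → ℝ) (hf : MemLp f (ENNReal.ofReal p) μ)
    (a : ℝ) (ha : 0 < a) :
    μ {y | ENNReal.ofReal a < centeredMaximal μ f y}
      ≤ (ENNReal.ofReal C * lpNorm μ p (fun y => (‖f y‖₊ : ℝ≥0∞)) / ENNReal.ofReal a) ^ p := by
  classical
  obtain ⟨T, hT, hBom⟩ := hB
  set Fp : X → ℝ≥0∞ := fun y => (‖f y‖₊ : ℝ≥0∞) with hFp
  set K : ℝ≥0∞ := ENNReal.ofReal C * lpNorm μ p Fp with hKdef
  have hppos : (0:ℝ) < p := lt_trans zero_lt_one hp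
  have hqp : q.HolderConjugate p := by
    have h1 : p.HolderConjugate (Real.conjExponent p) := Real.HolderConjugate.conjExponent hp
    have h2 : p.HolderConjugate q := by rw [hq]; exact h1
    exact h2.symm
  have hqpos : (0:ℝ) < q := hqp.left_pos
  have hFmeas : AEMeasurable Fp μ := hf.1.enorm
  set U : Set X := {y | ENNReal.ofReal a < centeredMaximal μ f y} with hUdef
  set S : Set X := {x : X | ∀ ε : ℝ, 0 < ε → 0 < μ (ball x ε)} with hSdef
  have hScompl : μ Sᶜ = 0 := by
    apply measure_null_of_locally_null
    intro x hx
    simp only [hSdef, mem_compl_iff, mem_setOf_eq, not_forall] at hx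
    obtain ⟨ε, hε, hball⟩ := hx
    exact ⟨ball x ε, mem_nhdsWithin_of_mem_nhds (ball_mem_nhds x hε),
      le_antisymm (not_lt.mp hball) zero_le⟩
  have hU_le : μ U ≤ μ (U ∩ S) := by
    calc μ U ≤ μ (U ∩ S) + μ (U \ S) := measure_le_inter_add_diff _ _ _
    _ ≤ μ (U ∩ S) + μ Sᶜ := by gcongr; exact fun z hz => hz.2
    _ = μ (U ∩ S) := by rw [hScompl, add_zero]
  have hUS : ∀ y ∈ U ∩ S, ∃ r : ℝ, 0 < r ∧ 0 < μ (closedBall y r) ∧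
      ENNReal.ofReal a * μ (closedBall y r) < ∫⁻ z in closedBall y r, ‖f z‖₊ ∂μ := by
    intro y hy
    have h1 : ENNReal.ofReal a < centeredMaximal μ f y := hy.1
    simp only [centeredMaximal, lt_iSup_iff] at h1
    obtain ⟨r, hr, hμr, hlt⟩ := h1
    refine ⟨r, hr, hμr, ?_⟩
    exact (ENNReal.lt_div_iff_mul_lt (Or.inl hμr.ne')
      (Or.inl (hfin _ isBounded_closedBall).ne)).mp hlt
  by_cases hUSne : (U ∩ S).Nonempty
  swap
  · have h0 : μ (U ∩ S) = 0 := by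
      rw [not_nonempty_iff_eq_empty.mp hUSne]; exact measure_empty
    exact le_trans hU_le (le_trans h0.le zero_le)
  -- choose radii and the covering balls
  choose rad hrad0 hradpos hradlt using fun (y : ↥(U ∩ S)) => hUS y y.2
  set V : ↥(U ∩ S) → Set X := fun y => ball (y : X) (T (rad y) * rad y) with hVdef
  have hTmem : ∀ y : ↥(U ∩ S), T (rad y) ∈ Set.Ioo (0:ℝ) 1 := fun y => hT _ (hrad0 y)
  have hcover : U ∩ S ⊆ ⋃ y, V y := by
    intro z hz
    exact mem_iUnion.2 ⟨⟨z, hz⟩, mem_ball_self (mul_pos (hTmem ⟨z, hz⟩).1 (hrad0 ⟨z, hz⟩))⟩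
  obtain ⟨tset, htc, htU⟩ :=
    TopologicalSpace.isOpen_iUnion_countable V (fun y => isOpen_ball)
  obtain ⟨z0, hz0⟩ := hUSne
  obtain ⟨e, he⟩ := (htc.insert (⟨z0, hz0⟩ : ↥(U ∩ S))).exists_eq_range
    (insert_nonempty _ _)
  have hcover' : U ∩ S ⊆ ⋃ n, V (e n) := by
    intro z hz
    have h1 : z ∈ ⋃ y ∈ tset, V y := htU.symm ▸ hcover hz
    obtain ⟨y, hyt, hzy⟩ := mem_iUnion₂.mp h1
    have h2 : y ∈ Set.range e := he ▸ mem_insert_of_mem _ hyt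
    obtain ⟨n, rfl⟩ := h2
    exact mem_iUnion.2 ⟨n, hzy⟩
  -- the disjointized pieces
  set c : ℕ → X := fun n => ((e n : ↥(U ∩ S)) : X) with hcdef
  set R : ℕ → ℝ := fun n => rad (e n) with hRdef
  set D : ℕ → Set X := disjointed (fun n => V (e n)) with hDdef
  have hDmeas : ∀ n, MeasurableSet (D n) :=
    MeasurableSet.disjointed (fun n => measurableSet_ball)
  have hDsub : ∀ n, D n ⊆ ball (c n) (T (R n) * R n) := fun n => disjointed_subset _ n
  have hDdisj : Pairwise (Function.onFun Disjoint D) := disjoint_disjointed _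
  have hDfin : ∀ n, μ (D n) < ∞ := fun n =>
    lt_of_le_of_lt (measure_mono ((hDsub n).trans ball_subset_closedBall))
      (hfin _ isBounded_closedBall)
  have hUScover : μ (U ∩ S) ≤ μ (⋃ n, D n) := by
    refine measure_mono ?_
    rw [hDdef, iUnion_disjointed]
    exact hcover'
  -- per-index facts
  have hc_supp : ∀ n, ∀ ε : ℝ, 0 < ε → 0 < μ (ball (c n) ε) := fun n => (e n).2.2
  have hR0 : ∀ n, 0 < R n := fun n => hrad0 (e n)
  have hBpos : ∀ n, 0 < μ (closedBall (c n) (R n)) := fun n => hradpos (e n)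
  have hBne : ∀ n, μ (closedBall (c n) (R n)) ≠ ∞ := fun n => (hfin _ isBounded_closedBall).ne
  have hInt : ∀ n, ENNReal.ofReal a * μ (closedBall (c n) (R n))
      ≤ ∫⁻ z in closedBall (c n) (R n), ‖f z‖₊ ∂μ := fun n => (hradlt (e n)).le
  -- reduce to a finite estimate
  have hfinite : ∀ s : Finset ℕ, ∑ n ∈ s, μ (D n) ≤ (K / ENNReal.ofReal a) ^ p := by
    intro s
    set s' : Finset ℕ := s.filter (fun n => 0 < μ (D n)) with hs'def
    have hsum_eq : ∑ n ∈ s, μ (D n) = ∑ n ∈ s', μ (D n) :=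
      (Finset.sum_filter_of_ne (fun n _ h => pos_iff_ne_zero.mpr h)).symm
    rw [hsum_eq]
    set m : ℝ≥0∞ := ∑ n ∈ s', μ (D n) with hmdef
    rcases eq_or_ne m 0 with hm0 | hm0
    · exact hm0.le.trans zero_le
    have hmtop : m ≠ ∞ := (ENNReal.sum_lt_top.mpr (fun n _ => hDfin n)).ne
    have hDpos : ∀ n ∈ s', 0 < μ (D n) := fun n hn => (Finset.mem_filter.mp hn).2
    -- apply the Boman property through an enumeration of s'
    have hsum_fin : ∀ (g : ℕ → X → ℝ≥0∞) (y : X),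
        ∑ i : Fin s'.card, g ((s'.equivFin.symm i : s') : ℕ) y = ∑ n ∈ s', g n y := by
      intro g y
      rw [← Finset.sum_coe_sort s' (fun n => g n y)]
      exact Equiv.sum_comp s'.equivFin.symm (fun j => g (j : ℕ) y)
    have hboman := hBom s'.card
      (fun i => c ((s'.equivFin.symm i : s') : ℕ))
      (fun i => R ((s'.equivFin.symm i : s') : ℕ))
      (fun i => (μ (D ((s'.equivFin.symm i : s') : ℕ))).toReal)
      (fun i => T (R ((s'.equivFin.symm i : s') : ℕ)))
      (fun i => D ((s'.equivFin.symm i : s') : ℕ))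
      (fun i => hR0 _) (fun i => hc_supp _)
      (fun i => ENNReal.toReal_pos (hDpos _ (s'.equivFin.symm i).2).ne' (hDfin _).ne)
      (fun i => ⟨(hT _ (hR0 _)).1, le_refl _⟩)
      (fun i => hDmeas _)
      (fun i => hDpos _ (s'.equivFin.symm i).2)
      (fun i => (hDsub _).trans ball_subset_closedBall)
    rw [show (fun y => ∑ i : Fin s'.card,
          (closedBall (c ((s'.equivFin.symm i : s') : ℕ)) (R ((s'.equivFin.symm i : s') : ℕ))).indicator
            (fun _ => ENNReal.ofReal ((μ (D ((s'.equivFin.symm i : s') : ℕ))).toReal) /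
              μ (closedBall (c ((s'.equivFin.symm i : s') : ℕ)) (R ((s'.equivFin.symm i : s') : ℕ)))) y)
        = (fun y => ∑ n ∈ s', (closedBall (c n) (R n)).indicator
            (fun _ => ENNReal.ofReal ((μ (D n)).toReal) / μ (closedBall (c n) (R n))) y) from
        funext fun y => hsum_fin (fun n y => (closedBall (c n) (R n)).indicator
            (fun _ => ENNReal.ofReal ((μ (D n)).toReal) / μ (closedBall (c n) (R n))) y) y,
      show (fun y => ∑ i : Fin s'.card, (D ((s'.equivFin.symm i : s') : ℕ)).indicator
            (fun _ => ENNReal.ofReal ((μ (D ((s'.equivFin.symm i : s') : ℕ))).toReal) /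
              μ (D ((s'.equivFin.symm i : s') : ℕ))) y)
        = (fun y => ∑ n ∈ s', (D n).indicator
            (fun _ => ENNReal.ofReal ((μ (D n)).toReal) / μ (D n)) y) from
        funext fun y => hsum_fin (fun n y => (D n).indicator
            (fun _ => ENNReal.ofReal ((μ (D n)).toReal) / μ (D n)) y) y] at hboman
    -- identify the right-hand side with the indicator of the union
    have hRHSfun : ∀ y : X, ∑ n ∈ s', (D n).indicator
        (fun _ => ENNReal.ofReal ((μ (D n)).toReal) / μ (D n)) y
        = ∑ n ∈ s', (D n).indicator (fun _ => (1 : ℝ≥0∞)) y := by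
      intro y
      refine Finset.sum_congr rfl fun n hn => ?_
      have h1 : ENNReal.ofReal ((μ (D n)).toReal) / μ (D n) = 1 := by
        rw [ENNReal.ofReal_toReal (hDfin n).ne]
        exact ENNReal.div_self (hDpos n hn).ne' (hDfin n).ne
      rw [h1]
    have hpt : ∀ y : X, (∑ n ∈ s', (D n).indicator (fun _ => (1:ℝ≥0∞)) y) ^ q
        = ∑ n ∈ s', (D n).indicator (fun _ => (1:ℝ≥0∞)) y := by
      intro y
      by_cases hy : ∃ n ∈ s', y ∈ D n
      · obtain ⟨n₀, hn₀s, hn₀⟩ := hy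
        have hone : ∑ n ∈ s', (D n).indicator (fun _ => (1:ℝ≥0∞)) y = 1 := by
          rw [Finset.sum_eq_single_of_mem n₀ hn₀s]
          · simp [Set.indicator_of_mem hn₀]
          · intro n hn hne
            exact Set.indicator_of_notMem
              (fun hyn => (Set.disjoint_left.mp (hDdisj hne) hyn) hn₀) _
        rw [hone, ENNReal.one_rpow]
      · push_neg at hy
        have hzero : ∑ n ∈ s', (D n).indicator (fun _ => (1:ℝ≥0∞)) y = 0 :=
          Finset.sum_eq_zero fun n hn => Set.indicator_of_notMem (hy n hn) _
        rw [hzero, ENNReal.zero_rpow_of_pos hqpos]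
    have hRHS : lpNorm μ q (fun y => ∑ n ∈ s', (D n).indicator
        (fun _ => ENNReal.ofReal ((μ (D n)).toReal) / μ (D n)) y) = m ^ (1/q) := by
      unfold _root_.lpNorm
      have : ∫⁻ y, (∑ n ∈ s', (D n).indicator
          (fun _ => ENNReal.ofReal ((μ (D n)).toReal) / μ (D n)) y) ^ q ∂μ = m := by
        calc ∫⁻ y, (∑ n ∈ s', (D n).indicator
              (fun _ => ENNReal.ofReal ((μ (D n)).toReal) / μ (D n)) y) ^ q ∂μ
            = ∫⁻ y, ∑ n ∈ s', (D n).indicator (fun _ => (1:ℝ≥0∞)) y ∂μ := by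
              refine lintegral_congr fun y => ?_
              rw [hRHSfun y, hpt y]
          _ = ∑ n ∈ s', ∫⁻ y, (D n).indicator (fun _ => (1:ℝ≥0∞)) y ∂μ :=
              lintegral_finset_sum _ (fun n _ => measurable_const.indicator (hDmeas n))
          _ = ∑ n ∈ s', μ (D n) := by
              refine Finset.sum_congr rfl fun n _ => ?_
              exact lintegral_indicator_one (hDmeas n)
          _ = m := rfl
      rw [this]
    rw [hRHS] at hboman
    -- lower bound for the pairing
    set FB : X → ℝ≥0∞ := fun y => ∑ n ∈ s', (closedBall (c n) (R n)).indicator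
        (fun _ => ENNReal.ofReal ((μ (D n)).toReal) / μ (closedBall (c n) (R n))) y with hFBdef
    have hFBmeas : Measurable FB := by
      apply Finset.measurable_sum
      exact fun n _ => measurable_const.indicator measurableSet_closedBall
    have hpair : ENNReal.ofReal a * m ≤ ∫⁻ y, FB y * Fp y ∂μ := by
      have hrw : ∀ y, FB y * Fp y = ∑ n ∈ s', (closedBall (c n) (R n)).indicator
          (fun _ => ENNReal.ofReal ((μ (D n)).toReal) / μ (closedBall (c n) (R n))) y * Fp y :=
        fun y => Finset.sum_mul _ _ _
      calc ENNReal.ofReal a * m = ∑ n ∈ s', ENNReal.ofReal a * μ (D n) := Finset.mul_sum _ _ _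
        _ ≤ ∑ n ∈ s', ∫⁻ y, (closedBall (c n) (R n)).indicator
            (fun _ => ENNReal.ofReal ((μ (D n)).toReal) / μ (closedBall (c n) (R n))) y
              * Fp y ∂μ := by
            refine Finset.sum_le_sum fun n _ => ?_
            have h1 : ∀ y, (closedBall (c n) (R n)).indicator
                (fun _ => ENNReal.ofReal ((μ (D n)).toReal) / μ (closedBall (c n) (R n))) y
                  * Fp y
                = (closedBall (c n) (R n)).indicator
                  (fun z => ENNReal.ofReal ((μ (D n)).toReal)
                    / μ (closedBall (c n) (R n)) * Fp z) y := by
              intro y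
              rw [Set.indicator_mul_left]
            calc ENNReal.ofReal a * μ (D n)
                = μ (D n) / μ (closedBall (c n) (R n))
                  * (ENNReal.ofReal a * μ (closedBall (c n) (R n))) := by
                  rw [mul_comm (ENNReal.ofReal a) (μ (closedBall (c n) (R n))), ← mul_assoc,
                    ENNReal.div_mul_cancel (hBpos n).ne' (hBne n), mul_comm]
              _ ≤ μ (D n) / μ (closedBall (c n) (R n))
                  * ∫⁻ z in closedBall (c n) (R n), Fp z ∂μ := by
                  gcongr
                  exact hInt n
              _ = ∫⁻ y, (closedBall (c n) (R n)).indicator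
                  (fun z => ENNReal.ofReal ((μ (D n)).toReal)
                    / μ (closedBall (c n) (R n)) * Fp z) y ∂μ := by
                  rw [lintegral_indicator measurableSet_closedBall,
                    lintegral_const_mul'' _ hFmeas.restrict,
                    ENNReal.ofReal_toReal (hDfin n).ne]
              _ = ∫⁻ y, (closedBall (c n) (R n)).indicator
                  (fun _ => ENNReal.ofReal ((μ (D n)).toReal)
                    / μ (closedBall (c n) (R n))) y * Fp y ∂μ := by
                  refine lintegral_congr fun y => (h1 y).symm
        _ = ∫⁻ y, FB y * Fp y ∂μ := by
            rw [← lintegral_finset_sum']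
            · exact lintegral_congr fun y => (hrw y).symm
            · exact fun n _ =>
                (measurable_const.indicator measurableSet_closedBall).aemeasurable.mul hFmeas
    -- Hölder
    have hHolder : ∫⁻ y, FB y * Fp y ∂μ ≤ lpNorm μ q FB * lpNorm μ p Fp := by
      have := ENNReal.lintegral_mul_le_Lp_mul_Lq μ hqp hFBmeas.aemeasurable hFmeas
      simpa [_root_.lpNorm, Pi.mul_apply] using this
    -- combine
    have hmain : ENNReal.ofReal a * m ≤ K * m ^ (1/q) := by
      calc ENNReal.ofReal a * m ≤ ∫⁻ y, FB y * Fp y ∂μ := hpair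
        _ ≤ lpNorm μ q FB * lpNorm μ p Fp := hHolder
        _ ≤ ENNReal.ofReal C * m ^ (1/q) * lpNorm μ p Fp := by gcongr
        _ = K * m ^ (1/q) := by rw [hKdef]; ring
    -- cancel m ^ (1/q)
    have hmq_ne : m ^ (1/q) ≠ 0 := (ENNReal.rpow_pos (pos_iff_ne_zero.mpr hm0) hmtop).ne'
    have hmq_top : m ^ (1/q) ≠ ∞ :=
      ENNReal.rpow_ne_top_of_nonneg (by positivity) hmtop
    have hsplit : m = m ^ (1/p) * m ^ (1/q) := by
      rw [← ENNReal.rpow_add _ _ hm0 hmtop]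
      have : 1/p + 1/q = 1 := by
        rw [one_div, one_div, add_comm]
        exact hqp.inv_add_inv_eq_one
      rw [this, ENNReal.rpow_one]
    have hcancel : ENNReal.ofReal a * m ^ (1/p) ≤ K := by
      have h1 : (ENNReal.ofReal a * m ^ (1/p)) * m ^ (1/q) ≤ K * m ^ (1/q) := by
        rw [mul_assoc, ← hsplit]
        exact hmain
      exact (ENNReal.mul_le_mul_iff_left hmq_ne hmq_top).mp h1
    have hdiv : m ^ (1/p) ≤ K / ENNReal.ofReal a := by
      rw [ENNReal.le_div_iff_mul_le (Or.inl (ENNReal.ofReal_pos.mpr ha).ne')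
        (Or.inl ENNReal.ofReal_ne_top)]
      rw [mul_comm]
      exact hcancel
    calc m = (m ^ (1/p)) ^ p := by
          rw [← ENNReal.rpow_mul, one_div, inv_mul_cancel₀ hppos.ne', ENNReal.rpow_one]
      _ ≤ (K / ENNReal.ofReal a) ^ p := ENNReal.rpow_le_rpow hdiv hppos.le
  -- put everything together
  calc μ U ≤ μ (U ∩ S) := hU_le
    _ ≤ μ (⋃ n, D n) := hUScover
    _ = ∑' n, μ (D n) := measure_iUnion hDdisj hDmeas
    _ = ⨆ s : Finset ℕ, ∑ n ∈ s, μ (D n) := ENNReal.tsum_eq_iSup_sum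
    _ ≤ (K / ENNReal.ofReal a) ^ p := iSup_le hfinite

end
end

section
/- Let (X,d,μ) be a Vitali metric measure space with X second countable, let 1 < p < ∞ and q = p/(p-1). Assume (X,d,μ) has the weak q-Boman covering property with constant C. Then the centered maximal operator M_μ is of weak type (p,p) with constant C: for every f ∈ L^p(μ) and every a > 0, μ({M_μ f > a}) ≤ (C‖f‖_{L^p(μ)}/a)^p. -/
open MeasureTheory Metric ENNReal Set

noncomputable section

/-- `(X,d,μ)` is a Vitali metric measure space: for every set `A` and every family `ℬ` of
closed balls (coded by center–radius pairs) which covers `A` finely — i.e. every point of `A`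
is the center of balls of `ℬ` of arbitrarily small positive radius — there is a pairwise
disjoint subfamily `𝒞 ⊆ ℬ` covering `μ`-almost all of `A`. -/
def VitaliSpace {X : Type*} [MetricSpace X] [MeasurableSpace X] (μ : Measure X) : Prop :=
  ∀ (A : Set X) (ℬ : Set (X × ℝ)),
    (∀ b ∈ ℬ, 0 < b.2) →
    (∀ x ∈ A, ∀ ε : ℝ, 0 < ε → ∃ r : ℝ, 0 < r ∧ r < ε ∧ (x, r) ∈ ℬ) →
    ∃ 𝒞 ⊆ ℬ, 𝒞.PairwiseDisjoint (fun b => closedBall b.1 b.2) ∧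
      μ (A \ ⋃ b ∈ 𝒞, closedBall b.1 b.2) = 0

/-- The weak `q`-Boman covering property with constant `C`: for every `r > 0` there is
`T r ∈ (0,1)` such that for all finite sequences of closed balls with centers in the support of
`μ`, weights `w n > 0`, and contractions `0 < t n ≤ T (r n)`, we have
`‖ Σ w n 1_{B(x n, r n)}/μ(B(x n, r n)) ‖_q ≤
 C ‖ Σ w n 1_{B(x n, t n r n)}/μ(B(x n, t n r n)) ‖_q`. -/
def WeakBomanProperty {X : Type*} [MetricSpace X] [MeasurableSpace X]
    (μ : Measure X) (q : ℝ) (C : ℝ) : Prop :=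
  ∃ T : ℝ → ℝ, (∀ r : ℝ, 0 < r → T r ∈ Set.Ioo (0 : ℝ) 1) ∧
    ∀ (N : ℕ) (x : Fin N → X) (r w t : Fin N → ℝ),
      (∀ n, 0 < r n) →
      (∀ n, ∀ ε : ℝ, 0 < ε → 0 < μ (ball (x n) ε)) →
      (∀ n, 0 < w n) →
      (∀ n, 0 < t n ∧ t n ≤ T (r n)) →
      lpNorm μ q (fun y => ∑ n : Fin N, (closedBall (x n) (r n)).indicator
          (fun _ => ENNReal.ofReal (w n) / μ (closedBall (x n) (r n))) y)
        ≤ ENNReal.ofReal C * lpNorm μ q (fun y => ∑ n : Fin N,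
            (closedBall (x n) (t n * r n)).indicator
          (fun _ => ENNReal.ofReal (w n) / μ (closedBall (x n) (t n * r n))) y)

-- algebra lemma
lemma ennreal_algebra {p q : ℝ} (hpq : p.HolderConjugate q)
    (S L A : ℝ≥0∞) (hS : S ≠ ∞) (hA0 : A ≠ 0) (hAt : A ≠ ∞)
    (h : A * S ≤ L * S ^ (1/q)) : S ≤ (L / A) ^ p := by
  rcases eq_or_ne S 0 with rfl | hS0
  · simp [ENNReal.zero_rpow_of_pos hpq.pos]
  have hq0 : (1:ℝ)/q ≠ 0 := hpq.symm.one_div_ne_zero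
  have hSq0 : S ^ (1/q) ≠ 0 := by
    simp [ENNReal.rpow_eq_zero_iff, hS0, hS, hpq.symm.one_div_pos.not_gt, hpq.symm.one_div_pos]
  have hSqt : S ^ (1/q) ≠ ∞ := by
    simp [ENNReal.rpow_eq_top_iff, hS0, hS, hpq.symm.one_div_pos.not_gt, hpq.symm.one_div_pos]
  have hsplit : S = S ^ (1/p) * S ^ (1/q) := by
    rw [← ENNReal.rpow_add _ _ hS0 hS]
    rw [show (1:ℝ)/p + 1/q = 1 by rw [one_div, one_div]; exact hpq.inv_add_inv_eq_one, ENNReal.rpow_one]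
  have h2 : A * S ^ (1/p) * S ^ (1/q) ≤ L * S ^ (1/q) := by
    calc A * S ^ (1/p) * S ^ (1/q) = A * S := by rw [mul_assoc, ← hsplit]
    _ ≤ L * S ^ (1/q) := h
  have h3 : A * S ^ (1/p) ≤ L := by
    rwa [ENNReal.mul_le_mul_iff_left hSq0 hSqt] at h2
  have h4 : S ^ (1/p) ≤ L / A := by
    rw [ENNReal.le_div_iff_mul_le (Or.inl hA0) (Or.inl hAt), mul_comm]
    exact h3
  calc S = (S ^ (1/p)) ^ p := by
        rw [← ENNReal.rpow_mul, one_div, inv_mul_cancel₀ hpq.ne_zero, ENNReal.rpow_one]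
    _ ≤ (L / A) ^ p := ENNReal.rpow_le_rpow h4 hpq.nonneg

lemma sum_indicator_of_disjoint {X : Type*} {N : ℕ} (B : Fin N → Set X)
    (hd : Pairwise (Function.onFun Disjoint B)) (z : X) :
    ∑ n : Fin N, (B n).indicator (fun _ => (1:ℝ≥0∞)) z
      = (⋃ n, B n).indicator (fun _ => (1:ℝ≥0∞)) z := by
  by_cases hz : z ∈ ⋃ n, B n
  · obtain ⟨k, hk⟩ := mem_iUnion.1 hz
    rw [indicator_of_mem hz, Finset.sum_eq_single k]
    · rw [indicator_of_mem hk]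
    · intro j _ hj
      rw [indicator_of_notMem]
      intro hzj
      exact (Set.disjoint_left.1 (hd hj) hzj) hk
    · simp
  · rw [indicator_of_notMem hz]
    refine Finset.sum_eq_zero fun j _ => ?_
    exact indicator_of_notMem (fun hj => hz (mem_iUnion.2 ⟨j, hj⟩)) _


lemma key_finite {X : Type*} [MetricSpace X] [MeasurableSpace X] [BorelSpace X]
    (μ : Measure X)
    (hfin : ∀ s : Set X, Bornology.IsBounded s → μ s < ∞)
    {p q : ℝ} (hpq : p.HolderConjugate q)
    (C : ℝ) (hC : 0 < C)
    (T : ℝ → ℝ)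
    (hT2 : ∀ (N : ℕ) (x : Fin N → X) (r w t : Fin N → ℝ),
      (∀ n, 0 < r n) →
      (∀ n, ∀ ε : ℝ, 0 < ε → 0 < μ (ball (x n) ε)) →
      (∀ n, 0 < w n) →
      (∀ n, 0 < t n ∧ t n ≤ T (r n)) →
      lpNorm μ q (fun y => ∑ n : Fin N, (closedBall (x n) (r n)).indicator
          (fun _ => ENNReal.ofReal (w n) / μ (closedBall (x n) (r n))) y)
        ≤ ENNReal.ofReal C * lpNorm μ q (fun y => ∑ n : Fin N,
            (closedBall (x n) (t n * r n)).indicator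
          (fun _ => ENNReal.ofReal (w n) / μ (closedBall (x n) (t n * r n))) y))
    (f : X → ℝ) (hfm : AEMeasurable (fun z => (‖f z‖₊ : ℝ≥0∞)) μ)
    (a : ℝ) (ha : 0 < a)
    (N : ℕ) (c : Fin N → X) (r s : Fin N → ℝ)
    (hsupp : ∀ n, ∀ ε : ℝ, 0 < ε → 0 < μ (ball (c n) ε))
    (hr : ∀ n, 0 < r n)
    (havg : ∀ n, ENNReal.ofReal a * μ (closedBall (c n) (r n))
      ≤ ∫⁻ z in closedBall (c n) (r n), ‖f z‖₊ ∂μ)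
    (hs : ∀ n, 0 < s n ∧ s n ≤ T (r n) * r n)
    (hdisj : Pairwise (Function.onFun Disjoint fun n => closedBall (c n) (s n))) :
    ∑ n : Fin N, μ (closedBall (c n) (s n))
      ≤ (ENNReal.ofReal C * lpNorm μ p (fun z => (‖f z‖₊ : ℝ≥0∞)) / ENNReal.ofReal a) ^ p := by
  classical
  set F : X → ℝ≥0∞ := fun z => (‖f z‖₊ : ℝ≥0∞) with hF
  set Bb : Fin N → Set X := fun n => closedBall (c n) (r n) with hBb
  set Bs : Fin N → Set X := fun n => closedBall (c n) (s n) with hBs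
  have hμBb0 : ∀ n, μ (Bb n) ≠ 0 := fun n =>
    (lt_of_lt_of_le (hsupp n _ (hr n)) (measure_mono ball_subset_closedBall)).ne'
  have hμBbt : ∀ n, μ (Bb n) ≠ ∞ := fun n => (hfin _ isBounded_closedBall).ne
  have hμBs0 : ∀ n, μ (Bs n) ≠ 0 := fun n =>
    (lt_of_lt_of_le (hsupp n _ (hs n).1) (measure_mono ball_subset_closedBall)).ne'
  have hμBst : ∀ n, μ (Bs n) ≠ ∞ := fun n => (hfin _ isBounded_closedBall).ne
  set w : Fin N → ℝ := fun n => (μ (Bs n)).toReal with hww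
  have hw : ∀ n, 0 < w n := fun n => ENNReal.toReal_pos (hμBs0 n) (hμBst n)
  have hwof : ∀ n, ENNReal.ofReal (w n) = μ (Bs n) := fun n =>
    ENNReal.ofReal_toReal (hμBst n)
  set t : Fin N → ℝ := fun n => s n / r n with htt
  have ht : ∀ n, 0 < t n ∧ t n ≤ T (r n) := fun n =>
    ⟨div_pos (hs n).1 (hr n), (div_le_iff₀ (hr n)).2 (hs n).2⟩
  have htr : ∀ n, t n * r n = s n := fun n => div_mul_cancel₀ _ (hr n).ne'
  set g : X → ℝ≥0∞ := fun z => ∑ n : Fin N,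
    (Bb n).indicator (fun _ => ENNReal.ofReal (w n) / μ (Bb n)) z with hg
  have hgm : Measurable g :=
    Finset.measurable_sum _ fun n _ =>
      (measurable_const.indicator measurableSet_closedBall)
  -- Step A: duality
  have stepA : ENNReal.ofReal a * ∑ n : Fin N, μ (Bs n) ≤ ∫⁻ z, g z * F z ∂μ := by
    have h1 : ∫⁻ z, g z * F z ∂μ = ∑ n : Fin N,
        ∫⁻ z, (Bb n).indicator (fun _ => ENNReal.ofReal (w n) / μ (Bb n)) z * F z ∂μ := by
      rw [← lintegral_finset_sum']
      · simp only [hg, Finset.sum_mul]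
      · exact fun n _ =>
          ((measurable_const.indicator measurableSet_closedBall).aemeasurable.mul hfm)
    rw [h1]
    rw [Finset.mul_sum]
    refine Finset.sum_le_sum fun n _ => ?_
    have h2 : ∀ z, (Bb n).indicator (fun _ => ENNReal.ofReal (w n) / μ (Bb n)) z * F z
        = (Bb n).indicator (fun z => ENNReal.ofReal (w n) / μ (Bb n) * F z) z := by
      intro z
      by_cases hz : z ∈ Bb n <;> simp [hz]
    simp_rw [h2]
    rw [lintegral_indicator measurableSet_closedBall,
      lintegral_const_mul' _ _ (by
        simp only [Ne, ENNReal.div_eq_top]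
        push_neg
        exact ⟨fun _ => hμBb0 n, fun h => absurd h ENNReal.ofReal_ne_top⟩)]
    calc ENNReal.ofReal a * μ (Bs n)
        = ENNReal.ofReal (w n) / μ (Bb n) * (ENNReal.ofReal a * μ (Bb n)) := by
          rw [hwof, mul_comm (ENNReal.ofReal a) (μ (Bb n)), ← mul_assoc,
            ENNReal.div_mul_cancel (hμBb0 n) (hμBbt n)]
          exact mul_comm _ _
      _ ≤ ENNReal.ofReal (w n) / μ (Bb n) * ∫⁻ z in Bb n, F z ∂μ := by
          gcongr
          exact havg n
  -- Step B: Hölder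
  have stepB : ∫⁻ z, g z * F z ∂μ ≤ lpNorm μ q g * lpNorm μ p F := by
    have := ENNReal.lintegral_mul_le_Lp_mul_Lq μ hpq.symm hgm.aemeasurable hfm
    simpa [_root_.lpNorm, Pi.mul_apply] using this
  -- Step C: Boman
  have stepC : lpNorm μ q g ≤ ENNReal.ofReal C * lpNorm μ q (fun z => ∑ n : Fin N,
      (closedBall (c n) (t n * r n)).indicator
        (fun _ => ENNReal.ofReal (w n) / μ (closedBall (c n) (t n * r n))) z) :=
    hT2 N c r w t hr hsupp hw ht
  -- Step D: the contracted norm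
  have stepD : lpNorm μ q (fun z => ∑ n : Fin N,
      (closedBall (c n) (t n * r n)).indicator
        (fun _ => ENNReal.ofReal (w n) / μ (closedBall (c n) (t n * r n))) z)
      = (∑ n : Fin N, μ (Bs n)) ^ (1/q) := by
    have hfun : ∀ z, (∑ n : Fin N, (closedBall (c n) (t n * r n)).indicator
        (fun _ => ENNReal.ofReal (w n) / μ (closedBall (c n) (t n * r n))) z)
        = (⋃ n, Bs n).indicator (fun _ => (1:ℝ≥0∞)) z := by
      intro z
      rw [← sum_indicator_of_disjoint Bs hdisj z]
      refine Finset.sum_congr rfl fun n _ => ?_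
      rw [htr n]
      have : ENNReal.ofReal (w n) / μ (Bs n) = 1 := by
        rw [hwof]; exact ENNReal.div_self (hμBs0 n) (hμBst n)
      rw [show closedBall (c n) (s n) = Bs n from rfl, this]
    simp only [_root_.lpNorm]
    have hpow : ∀ z, ((⋃ n, Bs n).indicator (fun _ => (1:ℝ≥0∞)) z) ^ q
        = (⋃ n, Bs n).indicator (fun _ => (1:ℝ≥0∞)) z := by
      intro z
      by_cases hz : z ∈ ⋃ n, Bs n
      · simp [hz]
      · simp [hz, ENNReal.zero_rpow_of_pos hpq.symm.pos]
    calc (∫⁻ z, (∑ n : Fin N, (closedBall (c n) (t n * r n)).indicator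
          (fun _ => ENNReal.ofReal (w n) / μ (closedBall (c n) (t n * r n))) z) ^ q ∂μ) ^ (1/q)
        = (∫⁻ z, (⋃ n, Bs n).indicator (fun _ => (1:ℝ≥0∞)) z ∂μ) ^ (1/q) := by
          congr 1
          refine lintegral_congr fun z => ?_
          rw [hfun z, hpow z]
      _ = (∑ n : Fin N, μ (Bs n)) ^ (1/q) := by
          rw [lintegral_indicator (MeasurableSet.iUnion fun n => measurableSet_closedBall)]
          simp only [lintegral_one, Measure.restrict_apply_univ]
          rw [show (⋃ b, closedBall (c b) (s b)) = ⋃ n, Bs n from rfl,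
            measure_iUnion hdisj fun n => measurableSet_closedBall, tsum_fintype]
  -- combine
  have chain : ENNReal.ofReal a * ∑ n : Fin N, μ (Bs n)
      ≤ (ENNReal.ofReal C * lpNorm μ p F) * (∑ n : Fin N, μ (Bs n)) ^ (1/q) := by
    calc ENNReal.ofReal a * ∑ n : Fin N, μ (Bs n)
        ≤ ∫⁻ z, g z * F z ∂μ := stepA
      _ ≤ lpNorm μ q g * lpNorm μ p F := stepB
      _ ≤ (ENNReal.ofReal C * (∑ n : Fin N, μ (Bs n)) ^ (1/q)) * lpNorm μ p F := by
          gcongr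
          rw [← stepD]
          exact stepC
      _ = (ENNReal.ofReal C * lpNorm μ p F) * (∑ n : Fin N, μ (Bs n)) ^ (1/q) := by ring
  exact ennreal_algebra hpq _ _ _
    (by simp only [Ne]; rw [ENNReal.sum_eq_top]; push_neg; exact fun n _ => hμBst n)
    (by simp [ha]) ENNReal.ofReal_ne_top chain

/-- If a Vitali (second countable) metric measure space has the weak `q`-Boman covering property
with constant `C`, where `q = p/(p-1)`, then the centered maximal operator is of weak type
`(p,p)` with constant `C`. -/
theorem weak_type_of_weakBoman_of_vitali
    {X : Type*} [MetricSpace X] [MeasurableSpace X] [BorelSpace X]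
    [SecondCountableTopology X]
    (μ : Measure X) (hμ : μ ≠ 0)
    (hfin : ∀ s : Set X, Bornology.IsBounded s → μ s < ∞)
    (hVitali : VitaliSpace μ)
    (p q : ℝ) (hp : 1 < p) (hq : q = p / (p - 1))
    (C : ℝ) (hC : 0 < C)
    (hB : WeakBomanProperty μ q C)
    (f : X → ℝ) (hf : MemLp f (ENNReal.ofReal p) μ)
    (a : ℝ) (ha : 0 < a) :
    μ {y | ENNReal.ofReal a < centeredMaximal μ f y}
      ≤ (ENNReal.ofReal C * lpNorm μ p (fun y => (‖f y‖₊ : ℝ≥0∞)) / ENNReal.ofReal a) ^ p := by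
  classical
  obtain ⟨T, hT1, hT2⟩ := hB
  have hpq : p.HolderConjugate q := (Real.holderConjugate_iff_eq_conjExponent hp).2 hq
  have hfm : AEMeasurable (fun z => (‖f z‖₊ : ℝ≥0∞)) μ := hf.1.aemeasurable.nnnorm.coe_nnreal_ennreal
  set RHS := (ENNReal.ofReal C * lpNorm μ p (fun y => (‖f y‖₊ : ℝ≥0∞)) / ENNReal.ofReal a) ^ p
    with hRHS
  set N₀ : Set X := {x | ∃ ε : ℝ, 0 < ε ∧ μ (ball x ε) = 0} with hN₀def
  have hN₀ : μ N₀ = 0 := by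
    refine measure_null_of_locally_null _ fun x hx => ?_
    obtain ⟨ε, hε, h0⟩ := hx
    exact ⟨ball x ε, mem_nhdsWithin_of_mem_nhds (ball_mem_nhds x hε), h0⟩
  set E : Set X := {y | ENNReal.ofReal a < centeredMaximal μ f y} with hEdef
  set E' : Set X := E \ N₀ with hE'def
  have hEE' : μ E = μ E' := (measure_diff_null hN₀).symm
  have hsupp' : ∀ x ∈ E', ∀ ε : ℝ, 0 < ε → 0 < μ (ball x ε) := by
    intro x hx ε hε
    rcases eq_or_ne (μ (ball x ε)) 0 with h | h
    · exact absurd ⟨ε, hε, h⟩ hx.2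
    · exact pos_iff_ne_zero.2 h
  have hbig : ∀ x ∈ E', ∃ r : ℝ, 0 < r ∧
      ENNReal.ofReal a * μ (closedBall x r) ≤ ∫⁻ z in closedBall x r, ‖f z‖₊ ∂μ := by
    intro x hx
    have hx1 : ENNReal.ofReal a < centeredMaximal μ f x := hx.1
    simp only [centeredMaximal, lt_iSup_iff] at hx1
    obtain ⟨r, hr, hμr, hlt⟩ := hx1
    refine ⟨r, hr, ?_⟩
    have hne : μ (closedBall x r) ≠ 0 := hμr.ne'
    have hnt : μ (closedBall x r) ≠ ∞ := (hfin _ isBounded_closedBall).ne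
    exact ((ENNReal.lt_div_iff_mul_lt (Or.inl hne) (Or.inl hnt)).1 hlt).le
  choose! R hR0 hRavg using hbig
  obtain ⟨x₀, -⟩ := nonempty_of_measure_ne_zero (Measure.measure_univ_ne_zero.2 hμ)
  have hA : ∀ m : ℕ, μ (E' ∩ closedBall x₀ m) ≤ RHS := by
    intro m
    set A : Set X := E' ∩ closedBall x₀ m with hAdef
    set ℬ : Set (X × ℝ) := {b | b.1 ∈ A ∧ 0 < b.2 ∧ b.2 ≤ min 1 (T (R b.1) * R b.1)} with hBdef
    have hTpos : ∀ x ∈ A, 0 < T (R x) * R x := fun x hx =>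
      mul_pos (hT1 _ (hR0 x hx.1)).1 (hR0 x hx.1)
    have hfine : ∀ x ∈ A, ∀ ε : ℝ, 0 < ε → ∃ r : ℝ, 0 < r ∧ r < ε ∧ (x, r) ∈ ℬ := by
      intro x hx ε hε
      refine ⟨min (ε/2) (min 1 (T (R x) * R x)), ?_, ?_, ?_⟩
      · exact lt_min (half_pos hε) (lt_min one_pos (hTpos x hx))
      · exact (min_le_left _ _).trans_lt (half_lt_self hε)
      · exact ⟨hx, lt_min (half_pos hε) (lt_min one_pos (hTpos x hx)), min_le_right _ _⟩
    obtain ⟨𝒞, h𝒞B, hCdisj, hCnull⟩ := hVitali A ℬ (fun b hb => hb.2.1) hfine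
    have hball : ∀ b ∈ 𝒞, closedBall b.1 b.2 ⊆ closedBall x₀ (m + 1) := by
      intro b hb
      have h1 : b.1 ∈ A := (h𝒞B hb).1
      have h2 : b.2 ≤ 1 := (h𝒞B hb).2.2.trans (min_le_left _ _)
      have h3 : dist b.1 x₀ ≤ m := mem_closedBall.1 h1.2
      refine closedBall_subset_closedBall' ?_
      linarith
    have hpos : ∀ b ∈ 𝒞, 0 < μ (closedBall b.1 b.2) := fun b hb =>
      lt_of_lt_of_le (hsupp' _ ((h𝒞B hb).1).1 _ (h𝒞B hb).2.1)
        (measure_mono ball_subset_closedBall)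
    have hcnt : 𝒞.Countable := by
      have h2 := Measure.countable_meas_pos_of_disjoint_of_meas_iUnion_ne_top μ
        (As := fun b : ↥𝒞 => closedBall b.1.1 b.1.2)
        (fun b => measurableSet_closedBall)
        (fun b b' hbb => hCdisj b.2 b'.2 fun h => hbb (Subtype.ext h))
        (by
          have hsub : (⋃ b : ↥𝒞, closedBall b.1.1 b.1.2) ⊆ closedBall x₀ (m + 1) :=
            iUnion_subset fun b => hball b.1 b.2
          exact ne_of_lt (lt_of_le_of_lt (measure_mono hsub)
            (hfin _ isBounded_closedBall)))
      have h3 : {i : ↥𝒞 | 0 < μ (closedBall i.1.1 i.1.2)} = univ :=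
        eq_univ_of_forall fun b => hpos b.1 b.2
      rw [h3] at h2
      have : Countable ↥𝒞 := Set.countable_univ_iff.mp h2
      exact Set.countable_coe_iff.mp this
    have h4 : ∀ Fs : Finset ↥𝒞, ∑ b ∈ Fs, μ (closedBall b.1.1 b.1.2) ≤ RHS := by
      intro Fs
      set N := Fs.card with hN
      set e : ↥Fs ≃ Fin N := Fs.equivFin with he
      set bb : Fin N → ↥𝒞 := fun i => (e.symm i).1 with hbb
      have hbbmem : ∀ i, (bb i).1 ∈ 𝒞 := fun i => (bb i).2
      have hbbA : ∀ i, (bb i).1.1 ∈ A := fun i => (h𝒞B (hbbmem i)).1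
      set cc : Fin N → X := fun i => (bb i).1.1 with hcc
      set ss : Fin N → ℝ := fun i => (bb i).1.2 with hss
      set rr : Fin N → ℝ := fun i => R (cc i) with hrr
      have hdisjF : Pairwise (Function.onFun Disjoint fun i => closedBall (cc i) (ss i)) := by
        intro i j hij
        have hne : (bb i).1 ≠ (bb j).1 := by
          intro h
          exact hij (e.symm.injective (Subtype.ext (Subtype.ext h)))
        exact hCdisj (hbbmem i) (hbbmem j) hne
      have key := key_finite μ hfin hpq C hC T hT2 f hfm a ha N cc rr ss
        (fun i => hsupp' _ (hbbA i).1)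
        (fun i => hR0 _ (hbbA i).1)
        (fun i => hRavg _ (hbbA i).1)
        (fun i => ⟨(h𝒞B (hbbmem i)).2.1, ((h𝒞B (hbbmem i)).2.2).trans (min_le_right _ _)⟩)
        hdisjF
      have hsum : ∑ b ∈ Fs, μ (closedBall b.1.1 b.1.2)
          = ∑ i : Fin N, μ (closedBall (cc i) (ss i)) := by
        rw [← Finset.sum_coe_sort Fs (fun b => μ (closedBall b.1.1 b.1.2))]
        exact (Equiv.sum_comp e.symm fun b : ↥Fs => μ (closedBall b.1.1.1 b.1.1.2)).symm
      rw [hsum]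
      exact key
    calc μ A ≤ μ (A ∩ ⋃ b ∈ 𝒞, closedBall b.1 b.2) + μ (A \ ⋃ b ∈ 𝒞, closedBall b.1 b.2) :=
          measure_le_inter_add_diff μ A _
      _ = μ (A ∩ ⋃ b ∈ 𝒞, closedBall b.1 b.2) := by rw [hCnull, add_zero]
      _ ≤ μ (⋃ b ∈ 𝒞, closedBall b.1 b.2) := measure_mono inter_subset_right
      _ ≤ ∑' b : ↥𝒞, μ (closedBall b.1.1 b.1.2) := measure_biUnion_le μ hcnt _
      _ = ⨆ Fs : Finset ↥𝒞, ∑ b ∈ Fs, μ (closedBall b.1.1 b.1.2) := ENNReal.tsum_eq_iSup_sum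
      _ ≤ RHS := iSup_le h4
  have hEunion : E' = ⋃ n : ℕ, E' ∩ closedBall x₀ n := by
    ext x
    simp only [mem_iUnion, mem_inter_iff]
    constructor
    · intro hx
      obtain ⟨n, hn⟩ := exists_nat_ge (dist x x₀)
      exact ⟨n, hx, mem_closedBall.2 hn⟩
    · rintro ⟨n, hx, -⟩
      exact hx
  have hmono : Monotone (fun n : ℕ => E' ∩ closedBall x₀ n) := fun i j hij =>
    inter_subset_inter_right _ (closedBall_subset_closedBall (by exact_mod_cast hij))
  calc μ E = μ E' := hEE'
    _ = ⨆ n : ℕ, μ (E' ∩ closedBall x₀ n) := by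
        conv_lhs => rw [hEunion]
        exact Directed.measure_iUnion hmono.directed_le
    _ ≤ RHS := iSup_le hA

end
end

section
/- Let X := A ∪ (∪_{n≥0} A_n) ⊂ ℝ², where A = ℝ × {0} and A_n = [4n, 4n + 2^{-n}] × {2^{-n}}, equipped with the metric induced by the ℓ₁ norm on ℝ², and let μ be the Borel measure on X that equals one-dimensional Lebesgue measure on A and 2^{-n} times one-dimensional Lebesgue measure on each A_n (so μ(A_n) = 4^{-n}). Then for every 1 ≤ p < ∞ and every n ≥ 0, ‖M^u_μ 1_{A_n}‖_{L^p(μ)}^p > 2^n ‖1_{A_n}‖_{L^p(μ)}^p; consequently M^u_μ is not of strong type (p,p), nor of weak type (p,p), for any 1 ≤ p < ∞. -/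
open MeasureTheory Metric ENNReal Set

noncomputable section

/-- The plane `ℝ²` with the `ℓ¹` norm (so distances are `|x₁−y₁| + |x₂−y₂|`). -/
abbrev L1Plane := WithLp 1 (ℝ × ℝ)

instance : MeasurableSpace L1Plane := borel L1Plane
instance : BorelSpace L1Plane := ⟨rfl⟩

/-- The point `(s, c)` of the `ℓ¹` plane. -/
def pt (s c : ℝ) : L1Plane := (WithLp.equiv 1 (ℝ × ℝ)).symm (s, c)

/-- The horizontal axis `A = ℝ × {0}`. -/
def lineA : Set L1Plane := {z | (WithLp.equiv 1 (ℝ × ℝ) z).2 = 0}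

/-- The segment `A_n = [4n, 4n + 2^{-n}] × {2^{-n}}`. -/
def segA (n : ℕ) : Set L1Plane :=
  (fun s : ℝ => pt s ((2 : ℝ) ^ (-(n : ℤ)))) '' Icc (4 * (n : ℝ)) (4 * (n : ℝ) + 2 ^ (-(n : ℤ)))

/-- The space `X = A ∪ ⋃_n A_n`, as a subset of the `ℓ¹` plane. -/
def Xset : Set L1Plane := lineA ∪ ⋃ n : ℕ, segA n

/-- The measure on the `ℓ¹` plane which is one-dimensional Lebesgue measure on `A` and
`2^{-n}` times one-dimensional Lebesgue measure on each `A_n`. -/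
def μ₀ : Measure L1Plane :=
  (volume : Measure ℝ).map (fun s => pt s 0) +
    Measure.sum (fun n : ℕ =>
      ENNReal.ofReal ((2 : ℝ) ^ (-(n : ℤ))) •
        ((volume : Measure ℝ).restrict
            (Icc (4 * (n : ℝ)) (4 * (n : ℝ) + 2 ^ (-(n : ℤ)))) |>.map
          (fun s => pt s ((2 : ℝ) ^ (-(n : ℤ))))))

/-- The metric measure space `(X, d, μ)`: `X` carries the metric induced from the `ℓ¹` plane
and the measure `μX` induced (comapped) from `μ₀`. -/
def μX : Measure ↥Xset := μ₀.comap Subtype.val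

/-- The indicator function of `A_n`, as a function on `X`. -/
def indAn (n : ℕ) : ↥Xset → ℝ :=
  Set.indicator {z : ↥Xset | (z : L1Plane) ∈ segA n} (fun _ => (1 : ℝ))

-- ## auxiliary
def cn (n : ℕ) : ℝ := (2 : ℝ) ^ (-(n : ℤ))
def In (n : ℕ) : Set ℝ := Icc (4 * (n : ℝ)) (4 * (n : ℝ) + cn n)

lemma cn_eq (n : ℕ) : cn n = ((2:ℝ) ^ n)⁻¹ := by rw [cn, zpow_neg, zpow_natCast]
lemma cn_pos (n : ℕ) : 0 < cn n := by rw [cn_eq]; positivity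
lemma cn_le_one (n : ℕ) : cn n ≤ 1 := by
  rw [cn_eq]; exact inv_le_one_of_one_le₀ (one_le_pow₀ one_le_two)
lemma cn_inj {m n : ℕ} (h : cn m = cn n) : m = n := by
  rw [cn_eq, cn_eq, inv_inj] at h
  exact Nat.pow_right_injective (le_refl 2) (by exact_mod_cast h)
lemma cn_mul_two_pow (n : ℕ) : cn n * (2:ℝ)^n = 1 := by
  rw [cn_eq]; field_simp

lemma dist_pt_pt (a b c d : ℝ) : dist (pt a b) (pt c d) = |a - c| + |b - d| := by
  rw [WithLp.prod_dist_eq_add (by norm_num : 0 < (1:ℝ≥0∞).toReal)]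
  simp [pt, Real.dist_eq]

lemma continuous_pt (c : ℝ) : Continuous (fun s => pt s c) :=
  (WithLp.prod_continuous_toLp 1 ℝ ℝ).comp (continuous_id.prodMk continuous_const)

lemma measurable_pt (c : ℝ) : Measurable (fun s => pt s c) := (continuous_pt c).measurable

lemma segA_eq (n : ℕ) : segA n = (fun s => pt s (cn n)) '' In n := rfl

lemma mem_segA {z : L1Plane} {n : ℕ} :
    z ∈ segA n ↔ (WithLp.equiv 1 (ℝ×ℝ) z).2 = cn n ∧ (WithLp.equiv 1 (ℝ×ℝ) z).1 ∈ In n := by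
  constructor
  · rintro ⟨s, hs, rfl⟩; exact ⟨rfl, hs⟩
  · rintro ⟨h2, h1⟩
    refine ⟨(WithLp.equiv 1 (ℝ×ℝ) z).1, h1, ?_⟩
    show pt _ (cn n) = z
    rw [← h2]; rfl

lemma pt_mem_segA {s : ℝ} {n : ℕ} (hs : s ∈ In n) : pt s (cn n) ∈ segA n := ⟨s, hs, rfl⟩

lemma segA_subset_Xset (n : ℕ) : segA n ⊆ Xset :=
  fun z hz => Or.inr (mem_iUnion.2 ⟨n, hz⟩)

lemma pt0_mem_Xset (s : ℝ) : pt s 0 ∈ Xset := Or.inl rfl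

lemma measurableSet_segA (n : ℕ) : MeasurableSet (segA n) :=
  (((isCompact_Icc).image (continuous_pt (cn n))).isClosed).measurableSet

def Fn (n : ℕ) : Set L1Plane := (fun s => pt s 0) '' In n

lemma measurableSet_Fn (n : ℕ) : MeasurableSet (Fn n) :=
  (((isCompact_Icc).image (continuous_pt 0)).isClosed).measurableSet

lemma measurableSet_lineA : MeasurableSet lineA := by
  have : IsClosed lineA := isClosed_eq (by
    exact (continuous_snd.comp (WithLp.prod_continuous_ofLp 1 ℝ ℝ))) continuous_const
  exact this.measurableSet

lemma measurableSet_Xset : MeasurableSet Xset :=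
  measurableSet_lineA.union (MeasurableSet.iUnion measurableSet_segA)

-- the master formula for μ₀
lemma μ₀_apply {E : Set L1Plane} (hE : MeasurableSet E) :
    μ₀ E = volume ((fun s => pt s 0) ⁻¹' E)
      + ∑' m, ENNReal.ofReal (cn m) * volume ((fun s => pt s (cn m)) ⁻¹' E ∩ In m) := by
  rw [μ₀, Measure.add_apply, Measure.map_apply (measurable_pt 0) hE,
    Measure.sum_apply _ hE]
  congr 1
  refine tsum_congr fun m => ?_
  simp only [cn, In]
  rw [Measure.smul_apply, Measure.map_apply (measurable_pt ((2:ℝ)^(-(m:ℤ)))) hE,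
    Measure.restrict_apply (measurable_pt ((2:ℝ)^(-(m:ℤ))) hE)]
  rfl

lemma μX_apply (t : Set ↥Xset) : μX t = μ₀ (Subtype.val '' t) :=
  comap_subtype_coe_apply measurableSet_Xset μ₀ t

lemma μ₀_inter_Xset {E : Set L1Plane} (hE : MeasurableSet E) : μ₀ (E ∩ Xset) = μ₀ E := by
  rw [μ₀_apply (hE.inter measurableSet_Xset), μ₀_apply hE]
  have h1 : (fun s => pt s 0) ⁻¹' (E ∩ Xset) = (fun s => pt s 0) ⁻¹' E := by
    ext s
    simp only [mem_preimage, mem_inter_iff, and_iff_left_iff_imp]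
    exact fun _ => pt0_mem_Xset s
  have h2 : ∀ m : ℕ, (fun s => pt s (cn m)) ⁻¹' (E ∩ Xset) ∩ In m
      = (fun s => pt s (cn m)) ⁻¹' E ∩ In m := by
    intro m
    ext s
    simp only [mem_inter_iff, mem_preimage]
    constructor
    · rintro ⟨⟨h1, _⟩, h2⟩; exact ⟨h1, h2⟩
    · rintro ⟨h1, h2⟩
      exact ⟨⟨h1, segA_subset_Xset m (pt_mem_segA h2)⟩, h2⟩
  rw [h1]
  congr 1
  exact tsum_congr fun m => by rw [h2 m]

lemma μX_preimage_apply {E : Set L1Plane} (hE : MeasurableSet E) :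
    μX (Subtype.val ⁻¹' E) = μ₀ E := by
  rw [μX_apply, Subtype.image_preimage_coe, inter_comm, μ₀_inter_Xset hE]

lemma mem_Fn {z : L1Plane} {n : ℕ} :
    z ∈ Fn n ↔ (WithLp.equiv 1 (ℝ×ℝ) z).2 = 0 ∧ (WithLp.equiv 1 (ℝ×ℝ) z).1 ∈ In n := by
  constructor
  · rintro ⟨s, hs, rfl⟩; exact ⟨rfl, hs⟩
  · rintro ⟨h2, h1⟩
    refine ⟨(WithLp.equiv 1 (ℝ×ℝ) z).1, h1, ?_⟩
    show pt _ (0:ℝ) = z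
    rw [← h2]; rfl

lemma pre_c_segA {c : ℝ} {n : ℕ} (hc : c ≠ cn n) : (fun s => pt s c) ⁻¹' segA n = ∅ := by
  ext s; simp only [mem_preimage, mem_empty_iff_false, iff_false]
  intro h
  exact hc (mem_segA.1 h).1

lemma pre_n_segA (n : ℕ) : (fun s => pt s (cn n)) ⁻¹' segA n = In n := by
  ext s
  simp only [mem_preimage]
  constructor
  · intro h; exact (mem_segA.1 h).2
  · intro h; exact pt_mem_segA h

lemma pre_c_Fn {c : ℝ} {n : ℕ} (hc : c ≠ 0) : (fun s => pt s c) ⁻¹' Fn n = ∅ := by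
  ext s; simp only [mem_preimage, mem_empty_iff_false, iff_false]
  intro h
  exact hc (mem_Fn.1 h).1

lemma pre_0_Fn (n : ℕ) : (fun s => pt s 0) ⁻¹' Fn n = In n := by
  ext s
  simp only [mem_preimage]
  constructor
  · intro h; exact (mem_Fn.1 h).2
  · intro h; exact ⟨s, h, rfl⟩

lemma volume_In (n : ℕ) : volume (In n) = ENNReal.ofReal (cn n) := by
  rw [In, Real.volume_Icc]; congr 1; ring

lemma μ₀_segA (n : ℕ) : μ₀ (segA n) = ENNReal.ofReal (cn n) * ENNReal.ofReal (cn n) := by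
  rw [μ₀_apply (measurableSet_segA n), pre_c_segA (cn_pos n).ne, measure_empty,
    tsum_eq_single n ?h, pre_n_segA, inter_self, volume_In, zero_add]
  case h =>
    intro m hm
    rw [pre_c_segA (fun h => hm (cn_inj h)), empty_inter, measure_empty, mul_zero]

lemma μ₀_union (n : ℕ) :
    μ₀ (segA n ∪ Fn n) = ENNReal.ofReal (cn n) + ENNReal.ofReal (cn n) * ENNReal.ofReal (cn n) := by
  rw [μ₀_apply ((measurableSet_segA n).union (measurableSet_Fn n))]
  rw [preimage_union, pre_c_segA (cn_pos n).ne, pre_0_Fn, empty_union, volume_In]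
  rw [tsum_eq_single n ?h]
  · rw [preimage_union, pre_n_segA, pre_c_Fn (cn_pos n).ne', union_empty, inter_self, volume_In]
  case h =>
    intro m hm
    rw [preimage_union, pre_c_segA (fun h => hm (cn_inj h)), pre_c_Fn (cn_pos m).ne',
      union_empty, empty_inter, measure_empty, mul_zero]

lemma In_sep {m n : ℕ} (hmn : m ≠ n) {s s₀ : ℝ} (hs : s ∈ In m) (hs₀ : s₀ ∈ In n) :
    3 ≤ |s - s₀| := by
  obtain ⟨hs1, hs2⟩ := hs; obtain ⟨h1, h2⟩ := hs₀
  have hcm := cn_le_one m; have hcn := cn_le_one n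
  rcases lt_or_gt_of_ne hmn with h | h
  · have : (m:ℝ) + 1 ≤ n := by exact_mod_cast h
    refine le_abs.2 (Or.inr ?_); linarith
  · have : (n:ℝ) + 1 ≤ m := by exact_mod_cast h
    refine le_abs.2 (Or.inl ?_); linarith

lemma mem_ball_iff {s c s₀ : ℝ} {n : ℕ} {r : ℝ} :
    pt s c ∈ closedBall (pt s₀ (cn n)) r ↔ |s - s₀| + |c - cn n| ≤ r := by
  rw [mem_closedBall, dist_pt_pt]

lemma pre_0_ball {n : ℕ} {s₀ ε : ℝ} (hε : 0 < ε) :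
    (fun s => pt s 0) ⁻¹' closedBall (pt s₀ (cn n)) (cn n + ε) = Icc (s₀ - ε) (s₀ + ε) := by
  ext s
  rw [mem_preimage, mem_ball_iff]
  have h0 : |0 - cn n| = cn n := by rw [abs_sub_comm, sub_zero, abs_of_pos (cn_pos n)]
  rw [h0, mem_Icc]
  constructor
  · intro h
    have h' : |s - s₀| ≤ ε := by linarith
    have h2 := abs_sub_le_iff.1 h'
    constructor <;> linarith [h2.1, h2.2]
  · intro h
    have : |s - s₀| ≤ ε := abs_sub_le_iff.2 ⟨by linarith [h.1, h.2], by linarith [h.1, h.2]⟩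
    linarith

lemma abs_sub_le_cn {n : ℕ} {s s₀ : ℝ} (hs : s ∈ In n) (hs₀ : s₀ ∈ In n) :
    |s - s₀| ≤ cn n := by
  obtain ⟨a1, a2⟩ := hs; obtain ⟨b1, b2⟩ := hs₀
  rw [abs_sub_le_iff]; constructor <;> linarith

lemma μ₀_ball {n : ℕ} {s₀ ε : ℝ} (hs₀ : s₀ ∈ In n) (hε : 0 < ε) (hε1 : ε ≤ 1) :
    μ₀ (closedBall (pt s₀ (cn n)) (cn n + ε))
      = ENNReal.ofReal (2 * ε) + ENNReal.ofReal (cn n) * ENNReal.ofReal (cn n) := by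
  rw [μ₀_apply measurableSet_closedBall, pre_0_ball hε, Real.volume_Icc]
  have hvol : s₀ + ε - (s₀ - ε) = 2 * ε := by ring
  rw [hvol, tsum_eq_single n ?h]
  · have hpre : In n ⊆ (fun s => pt s (cn n)) ⁻¹' closedBall (pt s₀ (cn n)) (cn n + ε) := by
      intro s hs
      rw [mem_preimage, mem_ball_iff, sub_self, abs_zero, add_zero]
      linarith [abs_sub_le_cn hs hs₀]
    rw [inter_eq_self_of_subset_right hpre, volume_In]
  case h =>
    intro m hm
    have : (fun s => pt s (cn m)) ⁻¹' closedBall (pt s₀ (cn n)) (cn n + ε) ∩ In m = ∅ := by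
      ext s
      simp only [mem_inter_iff, mem_preimage, mem_empty_iff_false, iff_false, not_and]
      intro hball hIm
      rw [mem_ball_iff] at hball
      have h3 := In_sep hm hIm hs₀
      have := cn_le_one n
      have := abs_nonneg (cn m - cn n)
      linarith
    rw [this, measure_empty, mul_zero]

def Ssub (n : ℕ) : Set ↥Xset := Subtype.val ⁻¹' segA n
def Usub (n : ℕ) : Set ↥Xset := Subtype.val ⁻¹' (segA n ∪ Fn n)

lemma measurableSet_Ssub (n : ℕ) : MeasurableSet (Ssub n) :=
  measurable_subtype_coe (measurableSet_segA n)
lemma measurableSet_Usub (n : ℕ) : MeasurableSet (Usub n) :=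
  measurable_subtype_coe ((measurableSet_segA n).union (measurableSet_Fn n))

lemma μX_Ssub (n : ℕ) : μX (Ssub n) = ENNReal.ofReal (cn n * cn n) := by
  rw [Ssub, μX_preimage_apply (measurableSet_segA n), μ₀_segA,
    ← ENNReal.ofReal_mul (cn_pos n).le]

lemma μX_Usub (n : ℕ) : μX (Usub n) = ENNReal.ofReal (cn n + cn n * cn n) := by
  rw [Usub, μX_preimage_apply ((measurableSet_segA n).union (measurableSet_Fn n)), μ₀_union,
    ENNReal.ofReal_add (cn_pos n).le (mul_nonneg (cn_pos n).le (cn_pos n).le),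
    ← ENNReal.ofReal_mul (cn_pos n).le]

lemma closedBall_subtype (y : L1Plane) (hy : y ∈ Xset) (r : ℝ) :
    closedBall (⟨y, hy⟩ : ↥Xset) r = Subtype.val ⁻¹' closedBall y r := by
  ext z
  simp only [mem_closedBall, mem_preimage, Subtype.dist_eq]

lemma indAn_fun (n : ℕ) :
    (fun z => (‖indAn n z‖₊ : ℝ≥0∞)) = (Ssub n).indicator (fun _ => 1) := by
  funext z
  by_cases hz : (z : L1Plane) ∈ segA n
  · have h1 : z ∈ Ssub n := hz
    rw [indicator_of_mem h1]
    simp [indAn, indicator_of_mem, hz]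
  · have h1 : z ∉ Ssub n := hz
    rw [indicator_of_notMem h1]
    simp [indAn, indicator_of_notMem, hz]

lemma numerator_eq {n : ℕ} {B : Set ↥Xset} (hB : Ssub n ⊆ B) :
    ∫⁻ z in B, ‖indAn n z‖₊ ∂μX = μX (Ssub n) := by
  calc ∫⁻ z in B, ‖indAn n z‖₊ ∂μX
      = ∫⁻ z in B, (Ssub n).indicator (fun _ => 1) z ∂μX := by
        apply lintegral_congr; intro z; rw [← congrFun (indAn_fun n) z]
    _ = (μX.restrict B) (Ssub n) := by
        rw [lintegral_indicator (measurableSet_Ssub n), setLIntegral_one]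
    _ = μX (Ssub n ∩ B) := Measure.restrict_apply (measurableSet_Ssub n)
    _ = μX (Ssub n) := by rw [inter_eq_self_of_subset_left hB]

lemma term_le_maximal {n : ℕ} {z : ↥Xset} (hz : (z : L1Plane) ∈ segA n ∪ Fn n)
    {ε : ℝ} (hε : 0 < ε) (hε1 : ε ≤ 1) :
    ENNReal.ofReal (cn n * cn n) / (ENNReal.ofReal (2*ε) + ENNReal.ofReal (cn n * cn n))
      ≤ uncenteredMaximal μX (indAn n) z := by
  -- find the horizontal coordinate
  obtain ⟨s₀, hs₀, hdist⟩ : ∃ s₀ ∈ In n, dist (z : L1Plane) (pt s₀ (cn n)) ≤ cn n := by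
    rw [segA_eq] at hz
    rcases hz with h | h
    · obtain ⟨s, hs, hzeq⟩ := h
      refine ⟨s, hs, ?_⟩
      rw [← hzeq]
      show dist (pt s (cn n)) (pt s (cn n)) ≤ cn n
      rw [dist_pt_pt]
      simp [(cn_pos n).le]
    · obtain ⟨s, hs, hzeq⟩ := h
      refine ⟨s, hs, ?_⟩
      rw [← hzeq]
      show dist (pt s 0) (pt s (cn n)) ≤ cn n
      rw [dist_pt_pt]
      simp only [sub_self, abs_zero, zero_add, zero_sub, abs_neg]
      rw [abs_of_pos (cn_pos n)]
  set y : ↥Xset := ⟨pt s₀ (cn n), segA_subset_Xset n (pt_mem_segA hs₀)⟩ with hy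
  set r : ℝ := cn n + ε with hrdef
  have hr : 0 < r := by have := cn_pos n; rw [hrdef]; linarith
  have hball : closedBall y r = Subtype.val ⁻¹' closedBall (pt s₀ (cn n)) r :=
    closedBall_subtype _ _ r
  have hμball : μX (closedBall y r)
      = ENNReal.ofReal (2*ε) + ENNReal.ofReal (cn n * cn n) := by
    rw [hball, μX_preimage_apply measurableSet_closedBall, μ₀_ball hs₀ hε hε1,
      ← ENNReal.ofReal_mul (cn_pos n).le]
  have hsub : Ssub n ⊆ closedBall y r := by
    intro w hw
    have hw' : (↑w : L1Plane) ∈ (fun s => pt s (cn n)) '' In n := by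
      rw [← segA_eq]; exact hw
    obtain ⟨s, hs, hweq⟩ := hw'
    rw [mem_closedBall, Subtype.dist_eq, ← hweq]
    show dist (pt s (cn n)) (pt s₀ (cn n)) ≤ r
    rw [dist_pt_pt]
    simp only [sub_self, abs_zero, add_zero]
    have := abs_sub_le_cn hs hs₀
    rw [hrdef]; linarith
  have hdlt : dist z y < r := by
    rw [Subtype.dist_eq]; calc dist (z:L1Plane) (pt s₀ (cn n)) ≤ cn n := hdist
      _ < r := by rw [hrdef]; linarith
  have hpos : 0 < μX (closedBall y r) := by
    rw [hμball]
    exact lt_of_lt_of_le (ENNReal.ofReal_pos.2 (by linarith)) le_self_add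
  have hterm : (∫⁻ w in closedBall y r, ‖indAn n w‖₊ ∂μX) / μX (closedBall y r)
      = ENNReal.ofReal (cn n * cn n) / (ENNReal.ofReal (2*ε) + ENNReal.ofReal (cn n * cn n)) := by
    rw [numerator_eq hsub, μX_Ssub, hμball]
  rw [← hterm]
  exact le_iSup_of_le y (le_iSup_of_le r (le_iSup_of_le hr (le_iSup_of_le hdlt
    (le_iSup_of_le hpos le_rfl))))

open Filter Topology in
lemma one_le_maximal {n : ℕ} {z : ↥Xset} (hz : (z : L1Plane) ∈ segA n ∪ Fn n) :
    1 ≤ uncenteredMaximal μX (indAn n) z := by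
  have hc : 0 < cn n * cn n := mul_pos (cn_pos n) (cn_pos n)
  have hreal : Tendsto (fun ε : ℝ => (cn n * cn n) / (2*ε + cn n * cn n)) (𝓝 0) (𝓝 1) := by
    have hden : Tendsto (fun ε : ℝ => 2*ε + cn n * cn n) (𝓝 0) (𝓝 (cn n * cn n)) := by
      have hcont : Continuous (fun ε : ℝ => 2*ε + cn n * cn n) := by continuity
      simpa using hcont.tendsto 0
    have := (tendsto_const_nhds (x := cn n * cn n)).div hden hc.ne'
    rw [div_self hc.ne'] at this; exact this
  have h2 : Tendsto (fun ε : ℝ =>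
      ENNReal.ofReal (cn n * cn n) / (ENNReal.ofReal (2*ε) + ENNReal.ofReal (cn n * cn n)))
      (𝓝[>] 0) (𝓝 1) := by
    have h3 : Tendsto (fun ε : ℝ => ENNReal.ofReal ((cn n * cn n) / (2*ε + cn n * cn n)))
        (𝓝[>] 0) (𝓝 1) := by
      have h3' : Tendsto (fun ε : ℝ => (cn n * cn n) / (2*ε + cn n * cn n)) (𝓝[>] 0) (𝓝 1) :=
        hreal.mono_left nhdsWithin_le_nhds
      have h4 := ENNReal.tendsto_ofReal h3'
      simpa using h4
    refine h3.congr' ?_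
    filter_upwards [self_mem_nhdsWithin] with ε (hε : (0:ℝ) < ε)
    rw [ENNReal.ofReal_div_of_pos (by linarith), ENNReal.ofReal_add (by linarith) hc.le]
  refine le_of_tendsto h2 ?_
  filter_upwards [Ioc_mem_nhdsGT zero_lt_one] with ε hε
  exact term_le_maximal hz hε.1 hε.2

lemma lintegral_ind (n : ℕ) {p : ℝ} (hp : 0 < p) :
    ∫⁻ z, ((‖indAn n z‖₊ : ℝ≥0∞)) ^ p ∂μX = ENNReal.ofReal (cn n * cn n) := by
  have hfun : (fun z => ((‖indAn n z‖₊ : ℝ≥0∞)) ^ p) = (Ssub n).indicator (fun _ => 1) := by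
    funext z
    rw [congrFun (indAn_fun n) z]
    by_cases hz : z ∈ Ssub n
    · simp only [indicator_of_mem hz]
      exact ENNReal.one_rpow p
    · simp only [indicator_of_notMem hz]
      exact ENNReal.zero_rpow_of_pos hp
  rw [hfun, lintegral_indicator (measurableSet_Ssub n), setLIntegral_one, μX_Ssub]

lemma lintegral_max_lower (n : ℕ) {p : ℝ} (hp : 0 ≤ p) :
    ENNReal.ofReal (cn n + cn n * cn n)
      ≤ ∫⁻ z, (uncenteredMaximal μX (indAn n) z) ^ p ∂μX := by
  have : ENNReal.ofReal (cn n + cn n * cn n)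
      = ∫⁻ z, (Usub n).indicator (fun _ => 1) z ∂μX := by
    rw [lintegral_indicator (measurableSet_Usub n), setLIntegral_one, μX_Usub]
  rw [this]
  refine lintegral_mono fun z => ?_
  by_cases hz : z ∈ Usub n
  · rw [indicator_of_mem hz]
    calc (1:ℝ≥0∞) = 1 ^ p := (ENNReal.one_rpow p).symm
      _ ≤ (uncenteredMaximal μX (indAn n) z) ^ p :=
        ENNReal.rpow_le_rpow (one_le_maximal hz) hp
  · rw [indicator_of_notMem hz]
    exact zero_le

lemma two_pow_ennreal (n : ℕ) : (2:ℝ≥0∞) ^ n = ENNReal.ofReal ((2:ℝ) ^ n) := by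
  rw [ENNReal.ofReal_pow (by norm_num : (0:ℝ) ≤ 2), ENNReal.ofReal_ofNat]

lemma part1 (p : ℝ) (hp : 1 ≤ p) (n : ℕ) :
    (2 : ℝ≥0∞) ^ n * (∫⁻ z, ((‖indAn n z‖₊ : ℝ≥0∞)) ^ p ∂μX)
      < ∫⁻ z, (uncenteredMaximal μX (indAn n) z) ^ p ∂μX := by
  have hp0 : (0:ℝ) < p := lt_of_lt_of_le one_pos hp
  rw [lintegral_ind n hp0]
  have h2 : (2:ℝ≥0∞) ^ n * ENNReal.ofReal (cn n * cn n) = ENNReal.ofReal (cn n) := by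
    rw [two_pow_ennreal, ← ENNReal.ofReal_mul (by positivity)]
    congr 1
    calc (2:ℝ)^n * (cn n * cn n) = (cn n * 2^n) * cn n := by ring
      _ = 1 * cn n := by rw [cn_mul_two_pow]
      _ = cn n := one_mul _
  rw [h2]
  refine lt_of_lt_of_le ?_ (lintegral_max_lower n hp0.le)
  rw [ENNReal.ofReal_lt_ofReal_iff (by nlinarith [cn_pos n])]
  nlinarith [cn_pos n]

lemma exists_big (K : ℝ≥0∞) (hK : K ≠ ⊤) : ∃ n : ℕ, K < 2 ^ n := by
  obtain ⟨n, hn⟩ := ENNReal.exists_nat_gt hK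
  refine ⟨n, hn.trans_le ?_⟩
  have h : (n : ℝ≥0∞) ≤ ((2^n : ℕ) : ℝ≥0∞) := by
    exact_mod_cast Nat.le_of_lt (Nat.lt_two_pow_self (n := n))
  simpa [Nat.cast_pow] using h

lemma rpow_one_div_cancel (x : ℝ≥0∞) {p : ℝ} (hp : p ≠ 0) : (x ^ (1/p)) ^ p = x := by
  rw [← ENNReal.rpow_mul, one_div, inv_mul_cancel₀ hp, ENNReal.rpow_one]

lemma lpNorm_ind (n : ℕ) {p : ℝ} (hp : 0 < p) :
    lpNorm μX p (fun z => (‖indAn n z‖₊ : ℝ≥0∞)) = (ENNReal.ofReal (cn n * cn n)) ^ (1/p) := by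
  rw [_root_.lpNorm, lintegral_ind n hp]

lemma memLp_ind (n : ℕ) (q : ℝ≥0∞) : MemLp (indAn n) q μX := by
  rw [indAn]
  refine memLp_indicator_const q (measurableSet_Ssub n) 1 (Or.inr ?_)
  rw [μX_Ssub n]
  exact ENNReal.ofReal_ne_top

lemma strong_fail (p : ℝ) (hp : 1 ≤ p) :
    ¬ ∃ c : ℝ, 0 ≤ c ∧ ∀ g : ↥Xset → ℝ, MemLp g (ENNReal.ofReal p) μX →
      lpNorm μX p (uncenteredMaximal μX g)
        ≤ ENNReal.ofReal c * lpNorm μX p (fun z => (‖g z‖₊ : ℝ≥0∞)) := by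
  rintro ⟨c, hc0, hb⟩
  have hp0 : (0:ℝ) < p := lt_of_lt_of_le one_pos hp
  set K := (ENNReal.ofReal c) ^ p with hKdef
  have hKt : K ≠ ⊤ := ENNReal.rpow_ne_top_of_nonneg hp0.le ENNReal.ofReal_ne_top
  obtain ⟨n, hn⟩ := exists_big K hKt
  have h := hb (indAn n) (memLp_ind n _)
  have hA : ∫⁻ z, (uncenteredMaximal μX (indAn n) z) ^ p ∂μX
      ≤ K * ENNReal.ofReal (cn n * cn n) := by
    have h2 := ENNReal.rpow_le_rpow h hp0.le
    rw [lpNorm_ind n hp0, _root_.lpNorm, rpow_one_div_cancel _ hp0.ne',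
      ENNReal.mul_rpow_of_nonneg _ _ hp0.le, rpow_one_div_cancel _ hp0.ne'] at h2
    exact h2
  have hlt := (part1 p hp n).trans_le hA
  rw [lintegral_ind n hp0] at hlt
  have hq0 : ENNReal.ofReal (cn n * cn n) ≠ 0 := by
    rw [Ne, ENNReal.ofReal_eq_zero, not_le]
    exact mul_pos (cn_pos n) (cn_pos n)
  have h3 : (2:ℝ≥0∞)^n < K :=
    (ENNReal.mul_lt_mul_iff_left hq0 ENNReal.ofReal_ne_top).1 hlt
  exact absurd h3 (not_lt.2 hn.le)

lemma weak_fail (p : ℝ) (hp : 1 ≤ p) :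
    ¬ ∃ c : ℝ, 0 ≤ c ∧ ∀ g : ↥Xset → ℝ, MemLp g (ENNReal.ofReal p) μX →
      ∀ α : ℝ≥0∞, 0 < α →
        μX {z | α < uncenteredMaximal μX g z}
          ≤ (ENNReal.ofReal c * lpNorm μX p (fun z => (‖g z‖₊ : ℝ≥0∞)) / α) ^ p := by
  rintro ⟨c, hc0, hb⟩
  have hp0 : (0:ℝ) < p := lt_of_lt_of_le one_pos hp
  set K := (ENNReal.ofReal c) ^ p * (2:ℝ≥0∞) ^ p with hKdef
  have hKt : K ≠ ⊤ :=
    ENNReal.mul_ne_top (ENNReal.rpow_ne_top_of_nonneg hp0.le ENNReal.ofReal_ne_top)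
      (ENNReal.rpow_ne_top_of_nonneg hp0.le ENNReal.ofNat_ne_top)
  obtain ⟨n, hn⟩ := exists_big K hKt
  have h := hb (indAn n) (memLp_ind n _) 2⁻¹ (by norm_num)
  have hlow : ENNReal.ofReal (cn n)
      ≤ μX {z | 2⁻¹ < uncenteredMaximal μX (indAn n) z} := by
    calc ENNReal.ofReal (cn n) ≤ ENNReal.ofReal (cn n + cn n * cn n) :=
          ENNReal.ofReal_le_ofReal (by nlinarith [cn_pos n])
      _ = μX (Usub n) := (μX_Usub n).symm
      _ ≤ μX {z | 2⁻¹ < uncenteredMaximal μX (indAn n) z} := by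
          refine measure_mono fun z hz => ?_
          have h1 : (1:ℝ≥0∞) ≤ uncenteredMaximal μX (indAn n) z := one_le_maximal hz
          exact lt_of_lt_of_le (by norm_num) h1
  have hup : (ENNReal.ofReal c * lpNorm μX p (fun z => (‖indAn n z‖₊ : ℝ≥0∞)) / 2⁻¹) ^ p
      = K * ENNReal.ofReal (cn n * cn n) := by
    rw [lpNorm_ind n hp0, div_eq_mul_inv, inv_inv,
      ENNReal.mul_rpow_of_nonneg _ _ hp0.le, ENNReal.mul_rpow_of_nonneg _ _ hp0.le,
      rpow_one_div_cancel _ hp0.ne']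
    ring
  have hfin : ENNReal.ofReal (cn n) ≤ K * ENNReal.ofReal (cn n * cn n) :=
    hlow.trans (h.trans_eq hup)
  have hq0 : ENNReal.ofReal (cn n) ≠ 0 := by
    rw [Ne, ENNReal.ofReal_eq_zero, not_le]; exact cn_pos n
  have h1 : (1:ℝ≥0∞) ≤ K * ENNReal.ofReal (cn n) := by
    refine (ENNReal.mul_le_mul_iff_left hq0 ENNReal.ofReal_ne_top).1 ?_
    rw [one_mul, mul_assoc, ← ENNReal.ofReal_mul (cn_pos n).le]
    exact hfin
  have h2 : (2:ℝ≥0∞)^n ≤ K := by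
    calc (2:ℝ≥0∞)^n = (2:ℝ≥0∞)^n * 1 := (mul_one _).symm
      _ ≤ 2^n * (K * ENNReal.ofReal (cn n)) := mul_le_mul_right h1 _
      _ = K * ((2:ℝ≥0∞)^n * ENNReal.ofReal (cn n)) := by ring
      _ = K * ENNReal.ofReal ((2:ℝ)^n * cn n) := by
          rw [two_pow_ennreal, ← ENNReal.ofReal_mul (by positivity)]
      _ = K := by
          rw [show (2:ℝ)^n * cn n = 1 from by rw [mul_comm]; exact cn_mul_two_pow n,
            ENNReal.ofReal_one, mul_one]
  exact absurd h2 (not_le.2 hn)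

/-- On the space `X = A ∪ ⋃_n A_n` of Example 13 (with the `ℓ¹` metric and the measure that is
Lebesgue on `A` and `2^{-n}`·Lebesgue on `A_n`), for every `1 ≤ p < ∞` and every `n`,
`‖M^u 1_{A_n}‖_p^p > 2^n ‖1_{A_n}‖_p^p`; consequently `M^u` is of neither strong nor weak type
`(p,p)` for any `1 ≤ p < ∞`. -/
theorem maximal_unbounded_on_example :
    (∀ p : ℝ, 1 ≤ p → ∀ n : ℕ,
      (2 : ℝ≥0∞) ^ n * (∫⁻ z, ((‖indAn n z‖₊ : ℝ≥0∞)) ^ p ∂μX)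
        < ∫⁻ z, (uncenteredMaximal μX (indAn n) z) ^ p ∂μX) ∧
    (∀ p : ℝ, 1 ≤ p →
      ¬ ∃ c : ℝ, 0 ≤ c ∧ ∀ g : ↥Xset → ℝ, MemLp g (ENNReal.ofReal p) μX →
        lpNorm μX p (uncenteredMaximal μX g)
          ≤ ENNReal.ofReal c * lpNorm μX p (fun z => (‖g z‖₊ : ℝ≥0∞))) ∧
    (∀ p : ℝ, 1 ≤ p →
      ¬ ∃ c : ℝ, 0 ≤ c ∧ ∀ g : ↥Xset → ℝ, MemLp g (ENNReal.ofReal p) μX →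
        ∀ α : ℝ≥0∞, 0 < α →
          μX {z | α < uncenteredMaximal μX g z}
            ≤ (ENNReal.ofReal c * lpNorm μX p (fun z => (‖g z‖₊ : ℝ≥0∞)) / α) ^ p) := by
  exact ⟨fun p hp n => part1 p hp n, strong_fail, weak_fail⟩

end
end
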